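/- arXiv:2007.05327 — 6 statements merged into one kernel-verified Lean document; each statement's English description precedes it below -/
import Mathlib

section
/- Let I₀ = ∫₀^∞ e^{-s} log s ds. Then for all t > 0, 0 ≤ I(t) + log t − I₀ ≤ π t / 2, where I(t) = ∫₀^∞ (s e^{-s})/(s² + t²) ds. -/
open MeasureTheory Real

noncomputable def I (t : ℝ) : ℝ := ∫ s in Set.Ioi (0:ℝ), s * Real.exp (-s) / (s ^ 2 + t ^ 2)

noncomputable def I₀ : ℝ := ∫ s in Set.Ioi (0:ℝ), Real.exp (-s) * Real.log s

open Set Filter Topology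

private lemma intExp : IntegrableOn (fun s : ℝ => Real.exp (-s)) (Ioi 0) := by
  simpa using exp_neg_integrableOn_Ioi 0 one_pos

private lemma intExpMul : IntegrableOn (fun s : ℝ => Real.exp (-s) * s) (Ioi 0) := by
  have h := Real.GammaIntegral_convergent (by norm_num : (0:ℝ) < 2)
  refine h.congr_fun (fun s hs => ?_) measurableSet_Ioi
  simp only [show (2:ℝ) - 1 = 1 by norm_num, Real.rpow_one]

private lemma intExpRpow : IntegrableOn (fun s : ℝ => Real.exp (-s) * s ^ (-(1/2) : ℝ)) (Ioi 0) := by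
  have h := Real.GammaIntegral_convergent (by norm_num : (0:ℝ) < 1/2)
  refine h.congr_fun (fun s hs => ?_) measurableSet_Ioi
  norm_num

private lemma abs_log_le (s : ℝ) (hs : 0 < s) :
    |Real.log s| ≤ 2 * s ^ (-(1/2) : ℝ) + s := by
  rcases le_total s 1 with h | h
  · rw [abs_of_nonpos (Real.log_nonpos hs.le h)]
    have h1 : Real.log (s ^ (-(1/2):ℝ)) ≤ s ^ (-(1/2):ℝ) - 1 :=
      Real.log_le_sub_one_of_pos (Real.rpow_pos_of_pos hs _)
    rw [Real.log_rpow hs] at h1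
    nlinarith [Real.rpow_pos_of_pos hs (-(1/2):ℝ)]
  · rw [abs_of_nonneg (Real.log_nonneg h)]
    have h1 := Real.log_le_sub_one_of_pos hs
    have h2 : (0:ℝ) ≤ 2 * s ^ (-(1/2):ℝ) := by positivity
    linarith

private lemma intExpLog : IntegrableOn (fun s : ℝ => Real.exp (-s) * Real.log s) (Ioi 0) := by
  have hg : IntegrableOn
      (fun s : ℝ => 2 * (Real.exp (-s) * s ^ (-(1/2):ℝ)) + Real.exp (-s) * s) (Ioi 0) :=
    (intExpRpow.const_mul 2).add intExpMul
  refine hg.integrable.mono' ?_ ?_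
  · refine (ContinuousOn.aestronglyMeasurable ?_ measurableSet_Ioi)
    exact ((Real.continuous_exp.comp continuous_neg).continuousOn).mul
      (Real.continuousOn_log.mono (fun x hx => by simpa using ne_of_gt hx))
  · filter_upwards [ae_restrict_mem measurableSet_Ioi] with s hs
    have hs' : (0:ℝ) < s := hs
    have h1 : ‖Real.exp (-s) * Real.log s‖ = Real.exp (-s) * |Real.log s| := by
      rw [norm_mul, Real.norm_eq_abs, Real.norm_eq_abs, abs_of_pos (Real.exp_pos _)]
    rw [h1]
    have h2 := mul_le_mul_of_nonneg_left (abs_log_le s hs') (Real.exp_pos (-s)).le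
    nlinarith [Real.exp_pos (-s)]

private lemma abs_log_sq_le (t : ℝ) (ht : 0 < t) (s : ℝ) (hs : 0 ≤ s) :
    |Real.log (s^2 + t^2)| ≤ 2*|Real.log t| + 2*(s/t) := by
  have hst : (0:ℝ) < s + t := by linarith
  have h1 : Real.log (s^2 + t^2) ≤ 2 * (Real.log t + s/t) := by
    have e1 : Real.log (s^2+t^2) ≤ Real.log ((s+t)^2) :=
      Real.log_le_log (by positivity) (by nlinarith)
    rw [Real.log_pow] at e1
    have e2 : Real.log ((s+t)/t) ≤ (s+t)/t - 1 := Real.log_le_sub_one_of_pos (by positivity)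
    rw [Real.log_div hst.ne' ht.ne'] at e2
    have e3 : (s+t)/t - 1 = s/t := by field_simp; ring
    push_cast at e1
    nlinarith
  have h2 : 2 * Real.log t ≤ Real.log (s^2+t^2) := by
    have e1 : Real.log (t^2) ≤ Real.log (s^2+t^2) :=
      Real.log_le_log (by positivity) (by nlinarith)
    rw [Real.log_pow] at e1; push_cast at e1; linarith
  have h3 : -|Real.log t| ≤ Real.log t := neg_abs_le _
  have h4 : Real.log t ≤ |Real.log t| := le_abs_self _
  have h5 : 0 ≤ s/t := by positivity
  rw [abs_le]; constructor <;> nlinarith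

theorem I_log_bounds (t : ℝ) (ht : 0 < t) :
    0 ≤ I t + Real.log t - I₀ ∧ I t + Real.log t - I₀ ≤ π * t / 2 := by
  have hq : ∀ s : ℝ, (0:ℝ) < s^2 + t^2 := fun s => by positivity
  -- integrability of the two IBP pieces
  have hint_g1 : IntegrableOn (fun s : ℝ => s * Real.exp (-s) / (s^2 + t^2)) (Ioi 0) := by
    have hdom : IntegrableOn (fun s : ℝ => Real.exp (-s) / (2*t)) (Ioi 0) :=
      intExp.div_const (2*t)
    refine hdom.integrable.mono' ?_ ?_
    · refine ContinuousOn.aestronglyMeasurable ?_ measurableSet_Ioi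
      exact (continuousOn_id.mul (Real.continuous_exp.comp continuous_neg).continuousOn).div
        (by fun_prop) (fun x _ => (hq x).ne')
    · filter_upwards [ae_restrict_mem measurableSet_Ioi] with s hs
      have hs' : (0:ℝ) < s := hs
      have he := Real.exp_pos (-s)
      rw [Real.norm_eq_abs, abs_of_nonneg (by positivity)]
      rw [div_le_div_iff₀ (hq s) (by positivity)]
      nlinarith [mul_nonneg he.le (sq_nonneg (s - t))]
  have hint_g2 : IntegrableOn (fun s : ℝ => Real.exp (-s) * (Real.log (s^2 + t^2)/2)) (Ioi 0) := by
    have hdom : IntegrableOn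
        (fun s : ℝ => Real.exp (-s) * |Real.log t| + Real.exp (-s) * s * t⁻¹) (Ioi 0) :=
      (intExp.mul_const _).add (intExpMul.mul_const _)
    refine hdom.integrable.mono' ?_ ?_
    · refine ContinuousOn.aestronglyMeasurable ?_ measurableSet_Ioi
      refine ((Real.continuous_exp.comp continuous_neg).continuousOn).mul ?_
      exact ((by fun_prop : Continuous fun s : ℝ => s^2+t^2).continuousOn.log
        (fun x _ => (hq x).ne')).div_const 2
    · filter_upwards [ae_restrict_mem measurableSet_Ioi] with s hs
      have hs' : (0:ℝ) < s := hs
      have hb := abs_log_sq_le t ht s hs'.le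
      have he := Real.exp_pos (-s)
      rw [norm_mul, Real.norm_eq_abs, Real.norm_eq_abs, abs_of_pos he, abs_div]
      rw [abs_of_pos (by norm_num : (0:ℝ) < 2)]
      have h2 := mul_le_mul_of_nonneg_left hb he.le
      have h3 : Real.exp (-s) * s * t⁻¹ = Real.exp (-s) * (s/t) := by
        rw [div_eq_mul_inv]; ring
      rw [h3]
      nlinarith [mul_nonneg (Real.exp_pos (-s)).le (abs_nonneg (Real.log t)),
        mul_nonneg (Real.exp_pos (-s)).le (div_nonneg hs'.le ht.le)]
  -- Step 1 : integration by parts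
  have step1 : (∫ s in Ioi (0:ℝ), s * Real.exp (-s) / (s ^ 2 + t ^ 2))
      = -Real.log t + ∫ s in Ioi (0:ℝ), Real.exp (-s) * (Real.log (s^2 + t^2)/2) := by
    set F : ℝ → ℝ := fun s => Real.exp (-s) * (Real.log (s^2 + t^2)/2) with hF
    have hderiv : ∀ x : ℝ, HasDerivAt F
        (x * Real.exp (-x) / (x^2 + t^2) - Real.exp (-x) * (Real.log (x^2 + t^2)/2)) x := by
      intro x
      have he : HasDerivAt (fun s : ℝ => Real.exp (-s)) (Real.exp (-x) * (-1)) x :=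
        ((hasDerivAt_id x).neg).exp
      have hpoly : HasDerivAt (fun s : ℝ => s^2 + t^2) (2*x) x := by
        simpa using (hasDerivAt_pow 2 x).add_const (t^2)
      have hlog : HasDerivAt (fun s : ℝ => Real.log (s^2 + t^2)) (2*x / (x^2+t^2)) x :=
        hpoly.log (hq x).ne'
      have : HasDerivAt F (Real.exp (-x) * (-1) * (Real.log (x^2 + t^2)/2)
          + Real.exp (-x) * (2*x / (x^2+t^2) / 2)) x := he.mul (hlog.div_const 2)
      convert this using 1
      ring
    have hcont : ContinuousWithinAt F (Ici 0) 0 := by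
      apply Continuous.continuousWithinAt
      exact (Real.continuous_exp.comp continuous_neg).mul
        (((by fun_prop : Continuous fun s : ℝ => s^2+t^2).log
          (fun x => (hq x).ne')).div_const 2)
    have htend : Tendsto F atTop (𝓝 0) := by
      apply squeeze_zero_norm'
        (a := fun s => Real.exp (-s) * (2*|Real.log t|) + (s * Real.exp (-s)) * (2/t))
      · filter_upwards [eventually_ge_atTop (0:ℝ)] with s hs
        have he := Real.exp_pos (-s)
        have hb := abs_log_sq_le t ht s hs
        rw [hF]
        rw [norm_mul, Real.norm_eq_abs, Real.norm_eq_abs, abs_of_pos he, abs_div,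
          abs_of_pos (by norm_num : (0:ℝ) < 2)]
        have h2 := mul_le_mul_of_nonneg_left hb he.le
        have h3 : (s * Real.exp (-s)) * (2/t) = Real.exp (-s) * (2*(s/t)) := by
          rw [div_eq_mul_inv, div_eq_mul_inv]; ring
        rw [h3]
        nlinarith [mul_nonneg (Real.exp_pos (-s)).le (abs_nonneg (Real.log t)),
          mul_nonneg (Real.exp_pos (-s)).le (div_nonneg hs ht.le)]
      · have l1 : Tendsto (fun s : ℝ => Real.exp (-s) * (2*|Real.log t|)) atTop (𝓝 0) := by
          simpa using tendsto_exp_neg_atTop_nhds_zero.mul_const (2*|Real.log t|)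
        have l2 : Tendsto (fun s : ℝ => (s * Real.exp (-s)) * (2/t)) atTop (𝓝 0) := by
          have := (tendsto_pow_mul_exp_neg_atTop_nhds_zero 1).mul_const (2/t)
          simpa using this
        simpa using l1.add l2
    have key := integral_Ioi_of_hasDerivAt_of_tendsto hcont
      (fun x _ => hderiv x) (hint_g1.sub hint_g2) htend
    have hF0 : F 0 = Real.log t := by
      have h0 : (0:ℝ)^2 + t^2 = t^2 := by ring
      simp only [hF, neg_zero, Real.exp_zero, one_mul, h0, Real.log_pow]
      push_cast; ring
    rw [integral_sub hint_g1 hint_g2, hF0] at key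
    linarith [key]
  -- the function K and its properties
  set K : ℝ → ℝ := fun s => Real.log (1 + t^2/s^2) / 2 with hKdef
  have logid : ∀ s : ℝ, 0 < s →
      Real.log (1 + t^2/s^2) = Real.log (s^2 + t^2) - 2*Real.log s := by
    intro s hs
    rw [show 1 + t^2/s^2 = (s^2+t^2)/s^2 by field_simp]
    rw [Real.log_div (hq s).ne' (by positivity), Real.log_pow]
    push_cast; ring
  have hKpos : ∀ s : ℝ, 0 < s → 0 ≤ K s := by
    intro s hs
    have : (0:ℝ) ≤ t^2/s^2 := by positivity
    exact div_nonneg (Real.log_nonneg (by linarith)) (by norm_num)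
  have hKle : ∀ s : ℝ, 0 < s → K s ≤ t^2/s^2/2 := by
    intro s hs
    have h1 : Real.log (1 + t^2/s^2) ≤ t^2/s^2 := by
      have := Real.log_le_sub_one_of_pos (show (0:ℝ) < 1 + t^2/s^2 by positivity)
      linarith
    simp only [hKdef]; linarith
  have hKcont : ContinuousOn K (Ioi 0) := by
    refine ContinuousOn.div_const ?_ 2
    refine ContinuousOn.log ?_ ?_
    · exact continuousOn_const.add (continuousOn_const.div
        (by fun_prop) (fun x hx => pow_ne_zero 2 (ne_of_gt hx)))
    · intro x hx
      have : (0:ℝ) ≤ t^2/x^2 := by positivity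
      linarith
  have hK_Ioc : IntegrableOn K (Ioc 0 t) := by
    have hdom : IntegrableOn
        (fun s : ℝ => |Real.log (2*t^2)|/2 + (2 * s ^ (-(1/2):ℝ) + s)) (Ioc 0 t) := by
      have hconst : IntegrableOn (fun _ : ℝ => |Real.log (2*t^2)|/2) (Ioc 0 t) :=
        (MeasureTheory.integrableOn_const (C := |Real.log (2*t^2)|/2) (s := Ioc (0:ℝ) t)
          (μ := volume) measure_Ioc_lt_top.ne)
      refine hconst.add ?_
      refine Integrable.add ?_ ?_
      · exact ((intervalIntegral.intervalIntegrable_rpow'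
          (by norm_num : (-1:ℝ) < -(1/2))).1.const_mul 2)
      · exact (continuous_id.intervalIntegrable 0 t).1
    refine hdom.integrable.mono' ?_ ?_
    · exact (hKcont.mono Ioc_subset_Ioi_self).aestronglyMeasurable measurableSet_Ioc
    · filter_upwards [ae_restrict_mem measurableSet_Ioc] with s hs
      obtain ⟨hs0, hst⟩ := hs
      rw [Real.norm_eq_abs, abs_of_nonneg (hKpos s hs0), hKdef]
      have h1 : Real.log (s^2+t^2) ≤ Real.log (2*t^2) :=
        Real.log_le_log (hq s) (by nlinarith)
      have h2 : Real.log (2*t^2) ≤ |Real.log (2*t^2)| := le_abs_self _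
      have h3 := abs_log_le s hs0
      simp only []
      rw [logid s hs0]
      have h5 : -Real.log s ≤ 2 * s ^ (-(1/2):ℝ) + s := (neg_le_abs _).trans h3
      linarith
  have hK_Ioi : IntegrableOn K (Ioi t) := by
    have hdom : IntegrableOn (fun s : ℝ => t^2/2 * s ^ (-2:ℝ)) (Ioi t) :=
      (integrableOn_Ioi_rpow_of_lt (by norm_num) ht).const_mul _
    refine hdom.integrable.mono' ?_ ?_
    · exact (hKcont.mono (fun x hx => lt_trans ht hx)).aestronglyMeasurable measurableSet_Ioi
    · filter_upwards [ae_restrict_mem measurableSet_Ioi] with s hs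
      have hs0 : (0:ℝ) < s := lt_trans ht hs
      rw [Real.norm_eq_abs, abs_of_nonneg (hKpos s hs0)]
      have h1 := hKle s hs0
      have h2 : s ^ (-2:ℝ) = (s^2)⁻¹ := by
        rw [Real.rpow_neg hs0.le, ← Real.rpow_natCast s 2]
        norm_num
      rw [h2]
      calc K s ≤ t^2/s^2/2 := h1
        _ = t^2/2 * (s^2)⁻¹ := by field_simp
  have hK_int : IntegrableOn K (Ioi 0) := by
    rw [← Ioc_union_Ioi_eq_Ioi ht.le]
    exact hK_Ioc.union hK_Ioi
  -- Step 2 : value of ∫ K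
  have step2 : ∫ s in Ioi (0:ℝ), K s = π * t / 2 := by
    set Φ : ℝ → ℝ := fun s => s * (Real.log (1 + t^2/s^2) / 2) + t * Real.arctan (s/t) with hΦ
    set Φ₂ : ℝ → ℝ := fun s =>
      s * ((Real.log (s^2 + t^2) - 2*Real.log s) / 2) + t * Real.arctan (s/t) with hΦ₂
    have hEq : ∀ s : ℝ, 0 < s → Φ s = Φ₂ s := by
      intro s hs
      simp only [hΦ, hΦ₂, logid s hs]
    have hderiv : ∀ x ∈ Ioi (0:ℝ), HasDerivAt Φ (K x) x := by
      intro x hx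
      have hx' : (0:ℝ) < x := hx
      have hpoly : HasDerivAt (fun s : ℝ => s^2 + t^2) (2*x) x := by
        simpa using (hasDerivAt_pow 2 x).add_const (t^2)
      have hlog : HasDerivAt (fun s : ℝ => Real.log (s^2 + t^2)) (2*x / (x^2+t^2)) x :=
        hpoly.log (hq x).ne'
      have hlogs : HasDerivAt (fun s : ℝ => 2 * Real.log s) (2 * x⁻¹) x :=
        (Real.hasDerivAt_log hx'.ne').const_mul 2
      have h1 : HasDerivAt (fun s : ℝ => s * ((Real.log (s^2 + t^2) - 2*Real.log s) / 2))
          (1 * ((Real.log (x^2 + t^2) - 2*Real.log x) / 2)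
            + x * ((2*x/(x^2+t^2) - 2*x⁻¹)/2)) x :=
        (hasDerivAt_id x).mul ((hlog.sub hlogs).div_const 2)
      have h2 : HasDerivAt (fun s : ℝ => Real.arctan (s/t)) (1/(1+(x/t)^2) * (1/t)) x := by
        have := (Real.hasDerivAt_arctan (x/t)).comp x ((hasDerivAt_id x).div_const t)
        simpa [Function.comp_def] using this
      have h4 : HasDerivAt Φ₂
          (1 * ((Real.log (x^2 + t^2) - 2*Real.log x) / 2) + x * ((2*x/(x^2+t^2) - 2*x⁻¹)/2)
            + t * (1/(1+(x/t)^2) * (1/t))) x := h1.add (h2.const_mul t)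
      have h5 : HasDerivAt Φ (1 * ((Real.log (x^2 + t^2) - 2*Real.log x) / 2)
          + x * ((2*x/(x^2+t^2) - 2*x⁻¹)/2) + t * (1/(1+(x/t)^2) * (1/t))) x := by
        refine h4.congr_of_eventuallyEq ?_
        filter_upwards [Ioi_mem_nhds hx'] with y hy
        exact hEq y hy
      convert h5 using 1
      simp only [hKdef]
      rw [logid x hx']
      have e1 : 1 + (x/t)^2 = (x^2+t^2)/t^2 := by field_simp; ring
      rw [e1]
      field_simp
      ring
    have hcont : ContinuousWithinAt Φ (Ici 0) 0 := by
      rw [← Set.Ioi_insert]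
      rw [continuousWithinAt_insert_self]
      have hΦ0 : Φ 0 = 0 := by simp [hΦ]
      unfold ContinuousWithinAt
      rw [hΦ0]
      have htend2 : Tendsto Φ₂ (𝓝[Ioi 0] 0) (𝓝 0) := by
        have p1 : Tendsto (fun s : ℝ => s * (Real.log (s^2+t^2)/2)) (𝓝[Ioi 0] 0) (𝓝 0) := by
          have hc : ContinuousAt (fun s : ℝ => s * (Real.log (s^2+t^2)/2)) 0 := by
            apply ContinuousAt.mul continuousAt_id
            exact ((Real.continuousAt_log (by simpa using (hq 0).ne')).comp
              (by fun_prop)).div_const 2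
          have := hc.tendsto.mono_left (nhdsWithin_le_nhds (s := Ioi (0:ℝ)))
          simpa using this
        have p2 : Tendsto (fun s : ℝ => s * Real.log s) (𝓝[Ioi 0] 0) (𝓝 0) := by
          have := (Real.continuous_mul_log.tendsto 0).mono_left
            (nhdsWithin_le_nhds (s := Ioi (0:ℝ)))
          simpa using this
        have p3 : Tendsto (fun s : ℝ => t * Real.arctan (s/t)) (𝓝[Ioi 0] 0) (𝓝 0) := by
          have hc : ContinuousAt (fun s : ℝ => t * Real.arctan (s/t)) 0 :=
            (continuous_const.mul
              (Real.continuous_arctan.comp (continuous_id.div_const t))).continuousAt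
          have := hc.tendsto.mono_left (nhdsWithin_le_nhds (s := Ioi (0:ℝ)))
          simpa using this
        have comb := (p1.sub p2).add p3
        simp only [sub_zero, add_zero, zero_add] at comb
        refine comb.congr (fun s => ?_)
        simp only [hΦ₂]
        ring
      refine htend2.congr' ?_
      filter_upwards [self_mem_nhdsWithin] with s hs
      exact (hEq s hs).symm
    have htop : Tendsto Φ atTop (𝓝 (t * (π/2))) := by
      have pA : Tendsto (fun s : ℝ => s * (Real.log (1 + t^2/s^2) / 2)) atTop (𝓝 0) := by
        apply squeeze_zero' (g := fun s : ℝ => t^2/2 * s⁻¹)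
        · filter_upwards [eventually_gt_atTop (0:ℝ)] with s hs
          have : (0:ℝ) ≤ t^2/s^2 := by positivity
          exact mul_nonneg hs.le (div_nonneg (Real.log_nonneg (by linarith)) (by norm_num))
        · filter_upwards [eventually_gt_atTop (0:ℝ)] with s hs
          have h1 : Real.log (1 + t^2/s^2) ≤ t^2/s^2 := by
            have := Real.log_le_sub_one_of_pos (show (0:ℝ) < 1 + t^2/s^2 by positivity)
            linarith
          calc s * (Real.log (1 + t^2/s^2)/2) ≤ s * ((t^2/s^2)/2) := by
                apply mul_le_mul_of_nonneg_left _ hs.le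
                linarith
            _ = t^2/2 * s⁻¹ := by field_simp
        · have h := tendsto_inv_atTop_zero.const_mul (t^2/2)
          rw [mul_zero] at h
          exact h
      have pB : Tendsto (fun s : ℝ => t * Real.arctan (s/t)) atTop (𝓝 (t * (π/2))) := by
        have h1 : Tendsto (fun s : ℝ => s/t) atTop atTop := tendsto_id.atTop_div_const ht
        have h2 : Tendsto (fun s : ℝ => Real.arctan (s/t)) atTop (𝓝 (π/2)) :=
          (Real.tendsto_arctan_atTop.mono_right nhdsWithin_le_nhds).comp h1
        exact h2.const_mul t
      have := pA.add pB
      simpa using this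
    have key := integral_Ioi_of_hasDerivAt_of_tendsto hcont hderiv hK_int htop
    have hΦ0 : Φ 0 = 0 := by simp [hΦ]
    rw [hΦ0, sub_zero] at key
    rw [key]; ring
  -- integrability of exp(-s) * K s
  have hint_eK : IntegrableOn (fun s : ℝ => Real.exp (-s) * K s) (Ioi 0) := by
    refine hK_int.integrable.mono' ?_ ?_
    · exact (((Real.continuous_exp.comp continuous_neg).continuousOn).mul
        hKcont).aestronglyMeasurable measurableSet_Ioi
    · filter_upwards [ae_restrict_mem measurableSet_Ioi] with s hs
      have hs' : (0:ℝ) < s := hs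
      rw [norm_mul, Real.norm_eq_abs, Real.norm_eq_abs, abs_of_pos (Real.exp_pos _),
        abs_of_nonneg (hKpos s hs')]
      exact mul_le_of_le_one_left (hKpos s hs')
        (Real.exp_le_one_iff.mpr (by linarith))
  -- Step 3: express I t + log t - I₀ as ∫ exp(-s) * K s
  have step3 : I t + Real.log t - I₀ = ∫ s in Ioi (0:ℝ), Real.exp (-s) * K s := by
    have e1 : I t + Real.log t - I₀
        = (∫ s in Ioi (0:ℝ), Real.exp (-s) * (Real.log (s^2 + t^2)/2))
          - ∫ s in Ioi (0:ℝ), Real.exp (-s) * Real.log s := by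
      rw [I, I₀, step1]; ring
    rw [e1, ← integral_sub hint_g2 intExpLog]
    refine setIntegral_congr_fun measurableSet_Ioi (fun s hs => ?_)
    have hs' : (0:ℝ) < s := hs
    simp only [hKdef]
    rw [logid s hs']
    ring
  constructor
  · rw [step3]
    refine setIntegral_nonneg measurableSet_Ioi (fun s hs => ?_)
    exact mul_nonneg (Real.exp_pos _).le (hKpos s hs)
  · rw [step3, ← step2]
    refine setIntegral_mono_on hint_eK hK_int measurableSet_Ioi (fun s hs => ?_)
    exact mul_le_of_le_one_left (hKpos s hs) (Real.exp_le_one_iff.mpr (by linarith [hs.out]))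
end

section
/- For every t > 0, ∫₀^∞ (s e^{-s})/(s² + t²) ds = ∫₀^∞ (cos s)/(s + t) ds, where the right-hand side is interpreted as an improper Riemann integral (limit of ∫₀^R as R → ∞). -/
open MeasureTheory Real Filter
open Set

lemma lap1_deriv {c : ℝ} (hc : 0 < c) (x : ℝ) :
    HasDerivAt (fun x : ℝ => -((x / c + (c ^ 2)⁻¹) * Real.exp (-(c * x))))
      (x * Real.exp (-(c * x))) x := by
  have h1 : HasDerivAt (fun x : ℝ => x / c + (c ^ 2)⁻¹) (1 / c) x := by
    simpa using ((hasDerivAt_id x).div_const c).add_const (c ^ 2)⁻¹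
  have h2 : HasDerivAt (fun x : ℝ => Real.exp (-(c * x))) (Real.exp (-(c * x)) * (-c)) x := by
    have : HasDerivAt (fun x : ℝ => -(c * x)) (-c) x := by
      simpa [Pi.neg_def] using ((hasDerivAt_id x).const_mul c).neg
    exact (Real.hasDerivAt_exp _).comp x this
  have := (h1.mul h2).neg
  refine this.congr_deriv ?_
  field_simp [hc.ne']
  ring

lemma lap1_tendsto {c : ℝ} (hc : 0 < c) :
    Tendsto (fun x : ℝ => -((x / c + (c ^ 2)⁻¹) * Real.exp (-(c * x)))) atTop (nhds 0) := by
  have h0 : Tendsto (fun x : ℝ => c * x) atTop atTop :=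
    Tendsto.const_mul_atTop hc tendsto_id
  have h1 : Tendsto (fun x : ℝ => (c * x) * Real.exp (-(c * x))) atTop (nhds 0) := by
    have := (tendsto_pow_mul_exp_neg_atTop_nhds_zero 1).comp h0
    simpa [Function.comp_def] using this
  have h2 : Tendsto (fun x : ℝ => Real.exp (-(c * x))) atTop (nhds 0) := by
    have := Real.tendsto_exp_neg_atTop_nhds_zero.comp h0
    simpa [Function.comp_def] using this
  have h3 : Tendsto (fun x : ℝ => -((c ^ 2)⁻¹ * ((c * x) * Real.exp (-(c * x)) + Real.exp (-(c * x)))))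
      atTop (nhds 0) := by
    have := ((h1.add h2).const_mul ((c ^ 2)⁻¹)).neg
    simpa using this
  refine h3.congr fun x => ?_
  field_simp

lemma lap1_integrable {c : ℝ} (hc : 0 < c) :
    IntegrableOn (fun x : ℝ => x * Real.exp (-(c * x))) (Ioi 0) := by
  refine integrableOn_Ioi_deriv_of_nonneg
    ((lap1_deriv hc 0).continuousAt.continuousWithinAt)
    (fun x hx => lap1_deriv hc x) (fun x hx => ?_) (lap1_tendsto hc)
  exact mul_nonneg (le_of_lt hx) (Real.exp_pos _).le

lemma lap1 {c : ℝ} (hc : 0 < c) :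
    ∫ x in Ioi (0 : ℝ), x * Real.exp (-(c * x)) = (c ^ 2)⁻¹ := by
  have := integral_Ioi_of_hasDerivAt_of_tendsto'
    (fun x _ => lap1_deriv hc x) (lap1_integrable hc) (lap1_tendsto hc)
  rw [this]
  simp

lemma lap2_deriv {u : ℝ} (hu : 0 < u) (s : ℝ) :
    HasDerivAt (fun s : ℝ => -((u * Real.sin s + Real.cos s) * Real.exp (-(u * s)) / (1 + u ^ 2)))
      (Real.sin s * Real.exp (-(u * s))) s := by
  have h1 : HasDerivAt (fun s : ℝ => u * Real.sin s + Real.cos s)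
      (u * Real.cos s - Real.sin s) s := by
    simpa [Pi.add_def, sub_eq_add_neg] using ((Real.hasDerivAt_sin s).const_mul u).add (Real.hasDerivAt_cos s)
  have h2 : HasDerivAt (fun s : ℝ => Real.exp (-(u * s))) (Real.exp (-(u * s)) * (-u)) s := by
    have : HasDerivAt (fun s : ℝ => -(u * s)) (-u) s := by
      simpa [Pi.neg_def] using ((hasDerivAt_id s).const_mul u).neg
    exact (Real.hasDerivAt_exp _).comp s this
  have h3 := ((h1.mul h2).div_const (1 + u ^ 2)).neg
  refine h3.congr_deriv ?_
  have h4 : (1 : ℝ) + u ^ 2 ≠ 0 := by positivity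
  field_simp
  ring

lemma lap2_integrable {u : ℝ} (hu : 0 < u) :
    IntegrableOn (fun s : ℝ => Real.sin s * Real.exp (-(u * s))) (Ioi 0) := by
  refine (exp_neg_integrableOn_Ioi 0 hu).mono' ?_ ?_
  · exact (Real.continuous_sin.mul (Real.continuous_exp.comp (by fun_prop))).aestronglyMeasurable
  · filter_upwards with s
    rw [norm_mul, Real.norm_eq_abs, Real.norm_eq_abs, Real.abs_exp]
    calc |Real.sin s| * Real.exp (-(u * s)) ≤ 1 * Real.exp (-(u * s)) := by
          gcongr; exact Real.abs_sin_le_one s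
      _ = Real.exp (-u * s) := by rw [one_mul]; ring_nf

lemma lap2_tendsto {u : ℝ} (hu : 0 < u) :
    Tendsto (fun s : ℝ => -((u * Real.sin s + Real.cos s) * Real.exp (-(u * s)) / (1 + u ^ 2)))
      atTop (nhds 0) := by
  have h0 : Tendsto (fun s : ℝ => u * s) atTop atTop := Tendsto.const_mul_atTop hu tendsto_id
  have h2 : Tendsto (fun s : ℝ => Real.exp (-(u * s))) atTop (nhds 0) := by
    have := Real.tendsto_exp_neg_atTop_nhds_zero.comp h0
    simpa [Function.comp_def] using this
  have hC : Tendsto (fun s : ℝ => (u + 1) / (1 + u ^ 2) * Real.exp (-(u * s))) atTop (nhds 0) := by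
    simpa using h2.const_mul ((u + 1) / (1 + u ^ 2))
  refine squeeze_zero_norm (fun s => ?_) hC
  have h4 : (0 : ℝ) < 1 + u ^ 2 := by positivity
  rw [norm_neg, norm_div, Real.norm_eq_abs, Real.norm_eq_abs, abs_of_pos h4, abs_mul,
    Real.abs_exp, div_mul_eq_mul_div]
  gcongr
  calc |u * Real.sin s + Real.cos s| ≤ |u * Real.sin s| + |Real.cos s| := abs_add_le _ _
    _ ≤ u * 1 + 1 := by
        rw [abs_mul, abs_of_pos hu]
        gcongr
        · exact Real.abs_sin_le_one s
        · exact Real.abs_cos_le_one s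
    _ = u + 1 := by ring

lemma lap2 {u : ℝ} (hu : 0 < u) :
    ∫ s in Ioi (0 : ℝ), Real.sin s * Real.exp (-(u * s)) = (1 + u ^ 2)⁻¹ := by
  have := integral_Ioi_of_hasDerivAt_of_tendsto'
    (fun s _ => lap2_deriv hu s) (lap2_integrable hu) (lap2_tendsto hu)
  rw [this]
  simp

lemma invsq_deriv {t : ℝ} (ht : 0 < t) {s : ℝ} (hs : 0 ≤ s) :
    HasDerivAt (fun s : ℝ => -(s + t)⁻¹) ((s + t) ^ 2)⁻¹ s := by
  have hst : s + t ≠ 0 := by positivity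
  have h1 : HasDerivAt (fun s : ℝ => s + t) 1 s := (hasDerivAt_id s).add_const t
  have := (h1.inv hst).neg
  refine this.congr_deriv ?_
  field_simp

lemma invsq_integrable {t : ℝ} (ht : 0 < t) :
    IntegrableOn (fun s : ℝ => ((s + t) ^ 2)⁻¹) (Ioi 0) := by
  have htend : Tendsto (fun s : ℝ => -(s + t)⁻¹) atTop (nhds 0) := by
    have : Tendsto (fun s : ℝ => s + t) atTop atTop := tendsto_atTop_add_const_right _ t tendsto_id
    simpa using (this.inv_tendsto_atTop).neg
  refine integrableOn_Ioi_deriv_of_nonneg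
    ((invsq_deriv ht le_rfl).continuousAt.continuousWithinAt)
    (fun x hx => invsq_deriv ht (le_of_lt hx)) (fun x hx => by positivity) htend

lemma sin_invsq_integrable {t : ℝ} (ht : 0 < t) :
    IntegrableOn (fun s : ℝ => Real.sin s / (s + t) ^ 2) (Ioi 0) := by
  refine (invsq_integrable ht).mono' ?_ ?_
  · apply ContinuousOn.aestronglyMeasurable ?_ measurableSet_Ioi
    apply ContinuousOn.div Real.continuous_sin.continuousOn (by fun_prop)
    intro x hx
    have : (0:ℝ) < x + t := by have := hx.out; positivity
    positivity
  · filter_upwards [ae_restrict_mem measurableSet_Ioi] with s hs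
    have h1 : (0:ℝ) < s + t := by have := hs.out; positivity
    rw [norm_div, Real.norm_eq_abs, Real.norm_eq_abs]
    rw [abs_of_pos (by positivity : (0:ℝ) < (s+t)^2), div_le_iff₀ (by positivity : (0:ℝ) < (s + t) ^ 2),
      inv_mul_cancel₀ (by positivity : ((s:ℝ)+t)^2 ≠ 0)]
    exact Real.abs_sin_le_one s

lemma fubini_key {t : ℝ} (ht : 0 < t) :
    ∫ s in Ioi (0 : ℝ), Real.sin s / (s + t) ^ 2
      = ∫ u in Ioi (0 : ℝ), u * Real.exp (-(t * u)) / (1 + u ^ 2) := by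
  set μ : Measure ℝ := volume.restrict (Ioi 0) with hμ
  have hcont : Continuous (fun p : ℝ × ℝ => Real.sin p.1 * (p.2 * Real.exp (-((p.1 + t) * p.2)))) := by
    fun_prop
  have hint : Integrable (fun p : ℝ × ℝ => Real.sin p.1 * (p.2 * Real.exp (-((p.1 + t) * p.2))))
      (μ.prod μ) := by
    rw [MeasureTheory.integrable_prod_iff hcont.aestronglyMeasurable]
    constructor
    · filter_upwards [ae_restrict_mem measurableSet_Ioi] with s hs
      have hst : (0:ℝ) < s + t := by have := hs.out; positivity
      exact ((lap1_integrable hst).const_mul _)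
    · have hmeas : AEStronglyMeasurable
          (fun s : ℝ => ∫ u, ‖Real.sin s * (u * Real.exp (-((s + t) * u)))‖ ∂μ) μ :=
        hcont.norm.aestronglyMeasurable.integral_prod_right'
      refine (invsq_integrable ht).mono' hmeas ?_
      filter_upwards [ae_restrict_mem measurableSet_Ioi] with s hs
      have hst : (0:ℝ) < s + t := by have := hs.out; positivity
      have hval : (fun u : ℝ => ‖Real.sin s * (u * Real.exp (-((s + t) * u)))‖)
          =ᵐ[μ] fun u => |Real.sin s| * (u * Real.exp (-((s + t) * u))) := by
        filter_upwards [ae_restrict_mem measurableSet_Ioi] with u hu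
        have hu' : (0:ℝ) < u := hu.out
        simp [abs_mul, Real.abs_exp, abs_of_pos hu']
      rw [Real.norm_eq_abs, integral_congr_ae hval, integral_const_mul, hμ, lap1 hst]
      rw [abs_of_nonneg (by positivity : (0:ℝ) ≤ |Real.sin s| * ((s+t)^2)⁻¹)]
      calc |Real.sin s| * ((s + t) ^ 2)⁻¹ ≤ 1 * ((s + t) ^ 2)⁻¹ := by
            gcongr; exact Real.abs_sin_le_one s
        _ = ((s + t) ^ 2)⁻¹ := one_mul _
  have hswap := MeasureTheory.integral_integral_swap
    (f := fun s u => Real.sin s * (u * Real.exp (-((s + t) * u)))) (μ := μ) (ν := μ) hint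
  calc ∫ s in Ioi (0:ℝ), Real.sin s / (s + t) ^ 2
      = ∫ s in Ioi (0:ℝ), ∫ u in Ioi (0:ℝ), Real.sin s * (u * Real.exp (-((s + t) * u))) := by
        refine setIntegral_congr_fun measurableSet_Ioi fun s hs => ?_
        have hst : (0:ℝ) < s + t := by have := hs.out; positivity
        rw [integral_const_mul, lap1 hst, div_eq_mul_inv]
    _ = ∫ u in Ioi (0:ℝ), ∫ s in Ioi (0:ℝ), Real.sin s * (u * Real.exp (-((s + t) * u))) := hswap
    _ = ∫ u in Ioi (0:ℝ), u * Real.exp (-(t * u)) / (1 + u ^ 2) := by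
        refine setIntegral_congr_fun measurableSet_Ioi fun u hu => ?_
        have hu' : (0:ℝ) < u := hu.out
        have hre : ∀ s : ℝ, Real.sin s * (u * Real.exp (-((s + t) * u)))
            = (u * Real.exp (-(t * u))) * (Real.sin s * Real.exp (-(u * s))) := by
          intro s
          rw [show -((s + t) * u) = -(u * s) + -(t * u) by ring, Real.exp_add]
          ring
        simp_rw [hre]
        rw [integral_const_mul, lap2 hu', div_eq_mul_inv]

lemma subst_key {t : ℝ} (ht : 0 < t) :
    ∫ u in Ioi (0 : ℝ), u * Real.exp (-(t * u)) / (1 + u ^ 2)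
      = ∫ v in Ioi (0 : ℝ), v * Real.exp (-v) / (v ^ 2 + t ^ 2) := by
  have h1 := MeasureTheory.integral_comp_mul_left_Ioi
    (fun v => v * Real.exp (-v) / (v ^ 2 + t ^ 2)) 0 ht
  simp only [mul_zero, smul_eq_mul] at h1
  have h2 : ∀ u ∈ Ioi (0:ℝ), (t * u) * Real.exp (-(t * u)) / ((t * u) ^ 2 + t ^ 2)
      = t⁻¹ * (u * Real.exp (-(t * u)) / (1 + u ^ 2)) := by
    intro u hu
    have : (t * u) ^ 2 + t ^ 2 = t ^ 2 * (1 + u ^ 2) := by ring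
    rw [this]
    field_simp
  rw [setIntegral_congr_fun measurableSet_Ioi h2, integral_const_mul] at h1
  have ht' : (t:ℝ)⁻¹ ≠ 0 := inv_ne_zero ht.ne'
  exact mul_left_cancel₀ ht' h1

lemma parts {t : ℝ} (ht : 0 < t) {R : ℝ} (hR : 0 ≤ R) :
    ∫ s in (0:ℝ)..R, Real.cos s / (s + t)
      = Real.sin R / (R + t) + ∫ s in (0:ℝ)..R, Real.sin s / (s + t) ^ 2 := by
  have huIcc : uIcc (0:ℝ) R = Set.Icc 0 R := uIcc_of_le hR
  have hpos : ∀ s ∈ uIcc (0:ℝ) R, (0:ℝ) < s + t := by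
    intro s hs
    rw [huIcc] at hs
    have := hs.1
    positivity
  have hd : ∀ s ∈ uIcc (0:ℝ) R,
      HasDerivAt (fun s => Real.sin s / (s + t))
        (Real.cos s / (s + t) - Real.sin s / (s + t) ^ 2) s := by
    intro s hs
    have hst : s + t ≠ 0 := (hpos s hs).ne'
    have h1 : HasDerivAt (fun s : ℝ => s + t) 1 s := (hasDerivAt_id s).add_const t
    have := (Real.hasDerivAt_sin s).div h1 hst
    refine this.congr_deriv ?_
    field_simp
  have hc1 : ContinuousOn (fun s => Real.cos s / (s + t)) (uIcc (0:ℝ) R) :=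
    ContinuousOn.div Real.continuous_cos.continuousOn (by fun_prop)
      fun s hs => (hpos s hs).ne'
  have hc2 : ContinuousOn (fun s => Real.sin s / (s + t) ^ 2) (uIcc (0:ℝ) R) :=
    ContinuousOn.div Real.continuous_sin.continuousOn (by fun_prop)
      fun s hs => by have := hpos s hs; positivity
  have hint : IntervalIntegrable
      (fun s => Real.cos s / (s + t) - Real.sin s / (s + t) ^ 2) volume 0 R :=
    (hc1.sub hc2).intervalIntegrable
  have heq := intervalIntegral.integral_eq_sub_of_hasDerivAt hd hint
  rw [intervalIntegral.integral_sub hc1.intervalIntegrable hc2.intervalIntegrable] at heq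
  simp only [Real.sin_zero, zero_div, sub_zero, zero_add] at heq
  linarith

theorem I_eq_improper_cos (t : ℝ) (ht : 0 < t) :
    Tendsto (fun R : ℝ => ∫ s in (0:ℝ)..R, Real.cos s / (s + t)) atTop
      (nhds (∫ s in Set.Ioi (0:ℝ), s * Real.exp (-s) / (s ^ 2 + t ^ 2))) := by
  have hkey : ∫ s in Ioi (0:ℝ), Real.sin s / (s + t) ^ 2
      = ∫ s in Set.Ioi (0:ℝ), s * Real.exp (-s) / (s ^ 2 + t ^ 2) := by
    rw [fubini_key ht, subst_key ht]
  have h2 : Tendsto (fun R : ℝ => ∫ s in (0:ℝ)..R, Real.sin s / (s + t) ^ 2) atTop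
      (nhds (∫ s in Ioi (0:ℝ), Real.sin s / (s + t) ^ 2)) :=
    intervalIntegral_tendsto_integral_Ioi 0 (sin_invsq_integrable ht) tendsto_id
  have h3 : Tendsto (fun R : ℝ => Real.sin R / (R + t)) atTop (nhds 0) := by
    have hb : Tendsto (fun R : ℝ => (R + t)⁻¹) atTop (nhds 0) :=
      (tendsto_atTop_add_const_right _ t tendsto_id).inv_tendsto_atTop
    refine squeeze_zero_norm' ?_ hb
    filter_upwards [Ici_mem_atTop (0:ℝ)] with R hR
    have hRt : (0:ℝ) < R + t := by have := hR.out; positivity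
    rw [norm_div, Real.norm_eq_abs, Real.norm_eq_abs, abs_of_pos hRt]
    rw [div_le_iff₀ hRt, inv_mul_cancel₀ hRt.ne']
    exact Real.abs_sin_le_one R
  have h4 : Tendsto (fun R : ℝ => Real.sin R / (R + t) + ∫ s in (0:ℝ)..R, Real.sin s / (s + t) ^ 2)
      atTop (nhds (∫ s in Ioi (0:ℝ), Real.sin s / (s + t) ^ 2)) := by
    have := h3.add h2
    simpa using this
  rw [← hkey]
  refine Tendsto.congr' ?_ h4
  filter_upwards [Ici_mem_atTop (0:ℝ)] with R hR
  exact (parts ht hR.out).symm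
end

section
/- For every t > 0, 2 I'(2t) − I'(t) > 0 and 8 I'(2t) − I'(t) < 0, where I'(t) = −∫₀^∞ (s² e^{-st})/(s² + 1) ds. Consequently 1/8 < I'(2t)/I'(t) < 1/2 for all t > 0. -/
open MeasureTheory Real

noncomputable def I' (t : ℝ) : ℝ := -∫ s in Set.Ioi (0:ℝ), s ^ 2 * Real.exp (-(s * t)) / (s ^ 2 + 1)

lemma integrable_aux {t c : ℝ} (ht : 0 < t) (hc : 0 < c) :
    IntegrableOn (fun s => s ^ 2 * Real.exp (-(s * t)) / (s ^ 2 + c)) (Set.Ioi 0) := by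
  refine Integrable.mono' (exp_neg_integrableOn_Ioi 0 ht) ?_ ?_
  · apply Measurable.aestronglyMeasurable
    fun_prop
  · filter_upwards with x
    have hx : (0:ℝ) < x ^ 2 + c := by positivity
    rw [Real.norm_eq_abs, abs_div, abs_of_nonneg (by positivity), abs_of_pos hx]
    rw [div_le_iff₀ hx]
    have h1 : x ^ 2 * Real.exp (-(x * t)) ≤ (x ^ 2 + c) * Real.exp (-(x * t)) := by
      have := Real.exp_pos (-(x * t))
      nlinarith
    calc x ^ 2 * Real.exp (-(x * t)) ≤ (x ^ 2 + c) * Real.exp (-(x * t)) := h1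
      _ = Real.exp (-t * x) * (x ^ 2 + c) := by ring_nf

lemma integral_pos_aux (f : ℝ → ℝ) (hint : IntegrableOn f (Set.Ioi 0))
    (hpos : ∀ s ∈ Set.Ioi (0:ℝ), 0 < f s) : 0 < ∫ s in Set.Ioi (0:ℝ), f s := by
  rw [setIntegral_pos_iff_support_of_nonneg_ae]
  · refine lt_of_lt_of_le ?_ (measure_mono (s := Set.Ioi (0:ℝ))
      (fun x hx => ⟨(hpos x hx).ne', hx⟩))
    simp [Real.volume_Ioi]
  · filter_upwards [ae_restrict_mem measurableSet_Ioi] with x hx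
    exact (hpos x hx).le
  · exact hint

lemma subst_lemma {t : ℝ} (ht : 0 < t) :
    (∫ s in Set.Ioi (0:ℝ), s ^ 2 * Real.exp (-(s * (2 * t))) / (s ^ 2 + 1))
      = (1/2) * ∫ s in Set.Ioi (0:ℝ), s ^ 2 * Real.exp (-(s * t)) / (s ^ 2 + 4) := by
  have h := integral_comp_mul_left_Ioi
      (fun u => u ^ 2 * Real.exp (-(u * t)) / (u ^ 2 + 4)) 0 (two_pos (α := ℝ))
  simp only [mul_zero, smul_eq_mul] at h
  rw [show (1/2 : ℝ) = (2:ℝ)⁻¹ by norm_num, ← h]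
  apply setIntegral_congr_fun measurableSet_Ioi
  intro x _
  have h1 : (x:ℝ) ^ 2 + 1 ≠ 0 := by positivity
  have h2 : ((2*x):ℝ) ^ 2 + 4 ≠ 0 := by positivity
  simp only
  rw [show (2*x) * t = x * (2*t) by ring]
  field_simp
  ring

theorem I'_ratio_bounds (t : ℝ) (ht : 0 < t) :
    (0 < 2 * I' (2 * t) - I' t ∧ 8 * I' (2 * t) - I' t < 0) ∧
    (1 / 8 < I' (2 * t) / I' t ∧ I' (2 * t) / I' t < 1 / 2) := by
  have ht2 : 0 < 2 * t := by linarith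
  have h1 := integrable_aux ht (c := 1) one_pos
  have h4 := integrable_aux ht (c := 4) (by norm_num)
  set A := ∫ s in Set.Ioi (0:ℝ), s ^ 2 * Real.exp (-(s * t)) / (s ^ 2 + 1) with hA
  set B := ∫ s in Set.Ioi (0:ℝ), s ^ 2 * Real.exp (-(s * t)) / (s ^ 2 + 4) with hB
  have hI't : I' t = -A := rfl
  have hI'2t : I' (2 * t) = -(1/2 * B) := by
    rw [I', subst_lemma ht]
  have key1 : 0 < A - B := by
    rw [← integral_sub h1 h4]
    apply integral_pos_aux _ (h1.sub h4)
    intro s hs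
    have hs' : (0:ℝ) < s := hs
    have he : 0 < Real.exp (-(s * t)) := Real.exp_pos _
    have hd1 : (0:ℝ) < s ^ 2 + 1 := by positivity
    have hd4 : (0:ℝ) < s ^ 2 + 4 := by positivity
    have : s ^ 2 * Real.exp (-(s * t)) / (s ^ 2 + 4)
        < s ^ 2 * Real.exp (-(s * t)) / (s ^ 2 + 1) := by
      apply div_lt_div_of_pos_left (by positivity) hd1 (by linarith)
    simpa [sub_pos] using this
  have key2 : 0 < 4 * B - A := by
    have : 0 < ∫ s in Set.Ioi (0:ℝ),
        (4 * (s ^ 2 * Real.exp (-(s * t)) / (s ^ 2 + 4)) - s ^ 2 * Real.exp (-(s * t)) / (s ^ 2 + 1)) := by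
      apply integral_pos_aux _ ((h4.const_mul 4).sub h1)
      intro s hs
      simp only [Pi.sub_apply]
      have hs' : (0:ℝ) < s := hs
      have he : 0 < Real.exp (-(s * t)) := Real.exp_pos _
      have hd1 : (0:ℝ) < s ^ 2 + 1 := by positivity
      have hd4 : (0:ℝ) < s ^ 2 + 4 := by positivity
      rw [sub_pos, mul_div_assoc', div_lt_div_iff₀ hd1 hd4]
      nlinarith [mul_pos (mul_pos (pow_pos hs' 2) he) (pow_pos hs' 2)]
    rwa [integral_sub (h4.const_mul 4) h1, MeasureTheory.integral_const_mul, ← hB, ← hA] at this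
  have hApos : 0 < A := by
    apply integral_pos_aux _ h1
    intro s hs
    have hs' : (0:ℝ) < s := hs
    positivity
  have hItneg : I' t < 0 := by rw [hI't]; linarith
  have c1 : 0 < 2 * I' (2 * t) - I' t := by rw [hI't, hI'2t]; linarith
  have c2 : 8 * I' (2 * t) - I' t < 0 := by rw [hI't, hI'2t]; linarith
  refine ⟨⟨c1, c2⟩, ?_, ?_⟩
  · rw [lt_div_iff_of_neg hItneg]; linarith
  · rw [div_lt_iff_of_neg hItneg]; linarith
end

section
/- With I'(t) = −∫₀^∞ (s² e^{-st})/(s²+1) ds, one has t³ I'(t) → −2 as t → ∞ and t I'(t) → −1 as t → 0⁺. In particular I'(2t)/I'(t) → 1/8 as t → ∞ and I'(2t)/I'(t) → 1/2 as t → 0⁺. -/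
open MeasureTheory Real Filter

lemma bound1_integrable : IntegrableOn (fun u : ℝ => u ^ 2 * Real.exp (-u)) (Set.Ioi 0) := by
  have h := Real.GammaIntegral_convergent (show (0:ℝ) < 3 by norm_num)
  refine h.congr_fun (fun x hx => ?_) measurableSet_Ioi
  beta_reduce
  rw [show (3:ℝ) - 1 = ((2:ℕ):ℝ) by norm_num, Real.rpow_natCast]
  ring

lemma integral_sq_exp : (∫ u in Set.Ioi (0:ℝ), u ^ 2 * Real.exp (-u)) = 2 := by
  have h := Real.Gamma_eq_integral (show (0:ℝ) < 3 by norm_num)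
  have h2 : Real.Gamma 3 = 2 := by
    rw [show (3:ℝ) = ((2:ℕ):ℝ) + 1 by norm_num, Real.Gamma_nat_eq_factorial]; norm_num
  have h3 : (∫ u in Set.Ioi (0:ℝ), u ^ 2 * Real.exp (-u)) = Real.Gamma 3 := by
    rw [h]
    refine setIntegral_congr_fun measurableSet_Ioi (fun x hx => ?_)
    rw [show (3:ℝ) - 1 = ((2:ℕ):ℝ) by norm_num, Real.rpow_natCast]
    ring
  rw [h3, h2]

lemma I'_eq {t : ℝ} (ht : 0 < t) :
    I' t = -(t⁻¹ * ∫ u in Set.Ioi (0:ℝ), u ^ 2 / (u ^ 2 + t ^ 2) * Real.exp (-u)) := by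
  have h := integral_comp_mul_left_Ioi (fun u => u ^ 2 / (u ^ 2 + t ^ 2) * Real.exp (-u)) 0 ht
  rw [mul_zero, smul_eq_mul] at h
  unfold I'
  rw [← h]
  congr 1
  refine setIntegral_congr_fun measurableSet_Ioi (fun s _ => ?_)
  have h1 : s ^ 2 + 1 > 0 := by positivity
  have h2 : (t * s) ^ 2 + t ^ 2 = t ^ 2 * (s ^ 2 + 1) := by ring
  simp only [h2, mul_comm s t]
  rw [show (t * s) ^ 2 = t ^ 2 * s ^ 2 by ring,
    mul_div_mul_left _ _ (by positivity : (t:ℝ) ^ 2 ≠ 0)]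
  rw [div_mul_eq_mul_div]

lemma lim_top : Tendsto (fun t : ℝ => ∫ u in Set.Ioi (0:ℝ),
    t ^ 2 * u ^ 2 / (u ^ 2 + t ^ 2) * Real.exp (-u)) atTop (nhds 2) := by
  rw [← integral_sq_exp]
  refine tendsto_integral_filter_of_dominated_convergence
    (fun u => u ^ 2 * Real.exp (-u)) ?_ ?_ bound1_integrable ?_
  · filter_upwards [eventually_gt_atTop (0:ℝ)] with t ht
    have hc : Continuous fun u : ℝ => t ^ 2 * u ^ 2 / (u ^ 2 + t ^ 2) * Real.exp (-u) := by
      refine Continuous.mul (Continuous.div (by continuity) (by continuity)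
        fun u => by positivity) (by continuity)
    exact hc.aestronglyMeasurable.restrict
  · filter_upwards [eventually_gt_atTop (0:ℝ)] with t ht
    refine Filter.Eventually.of_forall (fun u => ?_)
    rw [Real.norm_eq_abs, abs_of_nonneg (by positivity)]
    have hd : (0:ℝ) < u ^ 2 + t ^ 2 := by positivity
    refine mul_le_mul_of_nonneg_right ?_ (Real.exp_nonneg _)
    rw [div_le_iff₀ hd]
    nlinarith [sq_nonneg (u * u), sq_nonneg u, sq_nonneg t]
  · refine Filter.Eventually.of_forall (fun u => ?_)
    have hden : Tendsto (fun t : ℝ => u ^ 2 + t ^ 2) atTop atTop :=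
      tendsto_atTop_add_const_left _ _ (tendsto_pow_atTop two_ne_zero)
    have h0 : Tendsto (fun t : ℝ => u ^ 2 * u ^ 2 / (u ^ 2 + t ^ 2)) atTop (nhds 0) :=
      Tendsto.div_atTop tendsto_const_nhds hden
    have h1 : Tendsto (fun t : ℝ => (u ^ 2 - u ^ 2 * u ^ 2 / (u ^ 2 + t ^ 2)) * Real.exp (-u))
        atTop (nhds ((u ^ 2 - 0) * Real.exp (-u))) :=
      (tendsto_const_nhds.sub h0).mul_const _
    rw [show (u ^ 2 - 0) * Real.exp (-u) = u ^ 2 * Real.exp (-u) by ring] at h1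
    refine h1.congr' ?_
    filter_upwards [eventually_gt_atTop (0:ℝ)] with t ht
    have hd : (u:ℝ) ^ 2 + t ^ 2 ≠ 0 := by positivity
    field_simp
    ring

lemma lim_zero : Tendsto (fun t : ℝ => ∫ u in Set.Ioi (0:ℝ),
    u ^ 2 / (u ^ 2 + t ^ 2) * Real.exp (-u)) (nhdsWithin 0 (Set.Ioi (0:ℝ))) (nhds 1) := by
  rw [← integral_exp_neg_Ioi_zero]
  refine tendsto_integral_filter_of_dominated_convergence
    (fun u => Real.exp (-u)) ?_ ?_ (by simpa using exp_neg_integrableOn_Ioi 0 one_pos : IntegrableOn (fun u : ℝ => Real.exp (-u)) (Set.Ioi 0) volume) ?_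
  · filter_upwards [self_mem_nhdsWithin] with t ht
    have ht : (0:ℝ) < t := ht
    have hc : Continuous fun u : ℝ => u ^ 2 / (u ^ 2 + t ^ 2) * Real.exp (-u) := by
      refine Continuous.mul (Continuous.div (by continuity) (by continuity)
        fun u => by positivity) (by continuity)
    exact hc.aestronglyMeasurable.restrict
  · filter_upwards [self_mem_nhdsWithin] with t ht
    have ht : (0:ℝ) < t := ht
    refine Filter.Eventually.of_forall (fun u => ?_)
    rw [Real.norm_eq_abs, abs_of_nonneg (by positivity)]
    have hd : (0:ℝ) < u ^ 2 + t ^ 2 := by positivity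
    calc u ^ 2 / (u ^ 2 + t ^ 2) * Real.exp (-u)
        ≤ 1 * Real.exp (-u) := by
          refine mul_le_mul_of_nonneg_right ?_ (Real.exp_nonneg _)
          rw [div_le_one hd]; nlinarith
      _ = Real.exp (-u) := one_mul _
  · filter_upwards [ae_restrict_mem measurableSet_Ioi] with u hu
    have hu' : (0:ℝ) < u := hu
    have hden : Tendsto (fun t : ℝ => u ^ 2 + t ^ 2) (nhdsWithin 0 (Set.Ioi (0:ℝ)))
        (nhds (u ^ 2 + (0:ℝ) ^ 2)) :=
      (((continuous_const.add (continuous_pow 2)).tendsto 0)).mono_left nhdsWithin_le_nhds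
    have hne : u ^ 2 + (0:ℝ) ^ 2 ≠ 0 := by positivity
    have h1 := (Tendsto.div (tendsto_const_nhds (x := u ^ 2)) hden hne).mul_const
      (Real.exp (-u))
    have : u ^ 2 / (u ^ 2 + (0:ℝ) ^ 2) * Real.exp (-u) = Real.exp (-u) := by
      rw [show u ^ 2 + (0:ℝ) ^ 2 = u ^ 2 by ring, div_self (by positivity), one_mul]
    rwa [this] at h1

lemma h1_top : Tendsto (fun t => t ^ 3 * I' t) atTop (nhds (-2)) := by
  have := lim_top.neg
  rw [show -(2:ℝ) = -2 from rfl] at this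
  refine this.congr' ?_
  filter_upwards [eventually_gt_atTop (0:ℝ)] with t ht
  rw [I'_eq ht, mul_neg, ← mul_assoc,
    show t ^ 3 * t⁻¹ = t ^ 2 from by field_simp, ← integral_const_mul]
  congr 1
  refine setIntegral_congr_fun measurableSet_Ioi (fun u _ => ?_)
  ring

lemma h2_zero : Tendsto (fun t => t * I' t) (nhdsWithin 0 (Set.Ioi (0:ℝ))) (nhds (-1)) := by
  have := lim_zero.neg
  refine this.congr' ?_
  filter_upwards [self_mem_nhdsWithin] with t ht
  have ht : (0:ℝ) < t := ht
  rw [I'_eq ht, mul_neg, ← mul_assoc, mul_inv_cancel₀ ht.ne', one_mul]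

theorem I'_limits :
    Tendsto (fun t => t ^ 3 * I' t) atTop (nhds (-2)) ∧
    Tendsto (fun t => t * I' t) (nhdsWithin 0 (Set.Ioi (0:ℝ))) (nhds (-1)) ∧
    Tendsto (fun t => I' (2 * t) / I' t) atTop (nhds (1 / 8)) ∧
    Tendsto (fun t => I' (2 * t) / I' t) (nhdsWithin 0 (Set.Ioi (0:ℝ))) (nhds (1 / 2)) := by
  refine ⟨h1_top, h2_zero, ?_, ?_⟩
  · have hcomp : Tendsto (fun t : ℝ => 2 * t) atTop atTop :=
      (tendsto_id (α := ℝ)).const_mul_atTop two_pos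
    have h2t : Tendsto (fun t => (2 * t) ^ 3 * I' (2 * t)) atTop (nhds (-2)) :=
      h1_top.comp hcomp
    have hq : Tendsto (fun t => ((2 * t) ^ 3 * I' (2 * t)) / (t ^ 3 * I' t)) atTop
        (nhds ((-2) / (-2))) := h2t.div h1_top (by norm_num)
    have hq8 := hq.div_const 8
    rw [show ((-2:ℝ) / (-2)) / 8 = 1 / 8 by norm_num] at hq8
    refine hq8.congr' ?_
    filter_upwards [eventually_gt_atTop (0:ℝ)] with t ht
    have ht3 : (t:ℝ) ^ 3 ≠ 0 := by positivity
    rw [show (2 * t) ^ 3 * I' (2 * t) = t ^ 3 * (8 * I' (2 * t)) by ring,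
      mul_div_mul_left _ _ ht3, mul_div_assoc]
    ring
  · have hcomp : Tendsto (fun t : ℝ => 2 * t) (nhdsWithin 0 (Set.Ioi (0:ℝ)))
        (nhdsWithin 0 (Set.Ioi (0:ℝ))) := by
      refine tendsto_nhdsWithin_iff.mpr ⟨?_, ?_⟩
      · have := (continuous_mul_left (2:ℝ)).tendsto 0
        simpa using this.mono_left nhdsWithin_le_nhds
      · filter_upwards [self_mem_nhdsWithin] with t ht
        exact mul_pos two_pos (Set.mem_Ioi.mp ht)
    have h2t : Tendsto (fun t => (2 * t) * I' (2 * t)) (nhdsWithin 0 (Set.Ioi (0:ℝ)))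
        (nhds (-1)) := h2_zero.comp hcomp
    have hq : Tendsto (fun t => ((2 * t) * I' (2 * t)) / (t * I' t))
        (nhdsWithin 0 (Set.Ioi (0:ℝ))) (nhds ((-1) / (-1))) := h2t.div h2_zero (by norm_num)
    have hq2 := hq.div_const 2
    rw [show ((-1:ℝ) / (-1)) / 2 = 1 / 2 by norm_num] at hq2
    refine hq2.congr' ?_
    filter_upwards [self_mem_nhdsWithin] with t ht
    have ht' : (t:ℝ) ≠ 0 := ne_of_gt ht
    rw [show (2 * t) * I' (2 * t) = t * (2 * I' (2 * t)) by ring,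
      mul_div_mul_left _ _ ht', mul_div_assoc]
    ring
end

section
/- For each q ∈ (1/8, 1/2) there exists exactly one t₀ > 0 with I'(2t₀) = q I'(t₀), where I'(t) = −∫₀^∞ (s² e^{-st})/(s²+1) ds. Equivalently, t ↦ I'(2t)/I'(t) is a bijection from (0,∞) onto (1/8, 1/2). -/
open MeasureTheory Real Set
open scoped ENNReal

noncomputable def Jk (c t : ℝ) : ℝ :=
  ∫ s in Set.Ioi (0:ℝ), s ^ 2 * Real.exp (-(s * t)) / (s ^ 2 + c)

lemma kernel_cont {c t : ℝ} (hc : 0 < c) :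
    Continuous (fun s : ℝ => s ^ 2 * Real.exp (-(s * t)) / (s ^ 2 + c)) := by
  apply Continuous.div (by continuity) (by continuity)
  intro s; positivity

lemma kernel_nonneg {c t : ℝ} (hc : 0 < c) (s : ℝ) :
    0 ≤ s ^ 2 * Real.exp (-(s * t)) / (s ^ 2 + c) := by positivity

lemma kernel_le {c t : ℝ} (hc : 0 < c) (s : ℝ) :
    s ^ 2 * Real.exp (-(s * t)) / (s ^ 2 + c) ≤ Real.exp (-(t * s)) := by
  rw [mul_comm t s]
  rw [div_le_iff₀ (by positivity)]
  have h1 : s ^ 2 ≤ s ^ 2 + c := by linarith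
  calc s ^ 2 * Real.exp (-(s * t)) ≤ (s ^ 2 + c) * Real.exp (-(s * t)) := by
        apply mul_le_mul_of_nonneg_right h1 (Real.exp_pos _).le
    _ = Real.exp (-(s * t)) * (s ^ 2 + c) := by ring

lemma integrable_kernel {c t : ℝ} (hc : 0 < c) (ht : 0 < t) :
    IntegrableOn (fun s : ℝ => s ^ 2 * Real.exp (-(s * t)) / (s ^ 2 + c)) (Set.Ioi 0) := by
  apply Integrable.mono (exp_neg_integrableOn_Ioi 0 ht)
    ((kernel_cont hc).aestronglyMeasurable.restrict)
  filter_upwards with s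
  rw [Real.norm_eq_abs, Real.norm_eq_abs, abs_of_nonneg (kernel_nonneg hc s),
    abs_of_nonneg (Real.exp_pos _).le]
  simpa [neg_mul] using kernel_le hc s

lemma Jk_pos {c t : ℝ} (hc : 0 < c) (ht : 0 < t) : 0 < Jk c t := by
  have hnn : 0 ≤ᶠ[ae (volume.restrict (Set.Ioi (0:ℝ)))]
      fun s : ℝ => s ^ 2 * Real.exp (-(s * t)) / (s ^ 2 + c) := by
    filter_upwards with s; exact kernel_nonneg hc s
  rw [Jk, setIntegral_pos_iff_support_of_nonneg_ae hnn (integrable_kernel hc ht)]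
  have hsub : Set.Ioi (0:ℝ) ⊆
      Function.support (fun s : ℝ => s ^ 2 * Real.exp (-(s * t)) / (s ^ 2 + c)) := by
    intro s hs
    have hs' := Set.mem_Ioi.mp hs
    have : 0 < s ^ 2 * Real.exp (-(s * t)) / (s ^ 2 + c) := by positivity
    exact ne_of_gt this
  calc (0:ℝ≥0∞) < volume (Set.Ioi (0:ℝ)) := by simp
    _ ≤ volume ((Function.support fun s : ℝ => s ^ 2 * Real.exp (-(s * t)) / (s ^ 2 + c)) ∩ Set.Ioi 0) :=
      measure_mono (fun s hs => ⟨hsub hs, hs⟩)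

lemma I'_eq_s17 (t : ℝ) : I' t = -Jk 1 t := rfl

lemma Jk_scale (t : ℝ) : Jk 1 (2 * t) = (1/2) * Jk 4 t := by
  have key := MeasureTheory.integral_comp_mul_left_Ioi
    (fun u : ℝ => u ^ 2 * Real.exp (-(u * t)) / (u ^ 2 + 4)) 0 (by norm_num : (0:ℝ) < 2)
  simp only [mul_zero, smul_eq_mul] at key
  have hcong : Jk 1 (2 * t)
      = ∫ s in Set.Ioi (0:ℝ), (2*s) ^ 2 * Real.exp (-(2 * s * t)) / ((2*s) ^ 2 + 4) := by
    rw [Jk]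
    apply integral_congr_ae
    filter_upwards with s
    rw [mul_pow]
    have h4 : (2:ℝ) ^ 2 * s ^ 2 + 4 = 4 * (s ^ 2 + 1) := by ring
    have harg : 2 * s * t = s * (2 * t) := by ring
    rw [h4, harg]
    field_simp
    ring
  rw [hcong, key, Jk]
  norm_num

lemma integral_pos_of_pos_off {f : ℝ → ℝ} (hf : IntegrableOn f (Set.Ioi 0))
    (x : ℝ) (h0 : ∀ s ∈ Set.Ioi (0:ℝ), 0 ≤ f s)
    (hp : ∀ s ∈ Set.Ioi (0:ℝ), s ≠ x → 0 < f s) : 0 < ∫ s in Set.Ioi (0:ℝ), f s := by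
  have hnn : 0 ≤ᶠ[ae (volume.restrict (Set.Ioi (0:ℝ)))] f :=
    (ae_restrict_iff' measurableSet_Ioi).2 (Filter.Eventually.of_forall h0)
  rw [setIntegral_pos_iff_support_of_nonneg_ae hnn hf]
  have hsub : Set.Ioi (0:ℝ) \ {x} ⊆ Function.support f ∩ Set.Ioi 0 := by
    intro s hs
    exact ⟨ne_of_gt (hp s hs.1 (by simpa using hs.2)), hs.1⟩
  calc (0:ℝ≥0∞) < volume (Set.Ioi (0:ℝ) \ {x}) := by
        rw [measure_diff_null (measure_singleton x)]; simp
    _ ≤ _ := measure_mono hsub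

lemma setIntegral_lt {f g : ℝ → ℝ} (hf : IntegrableOn f (Set.Ioi 0))
    (hg : IntegrableOn g (Set.Ioi 0)) (h : ∀ s ∈ Set.Ioi (0:ℝ), f s < g s) :
    (∫ s in Set.Ioi (0:ℝ), f s) < ∫ s in Set.Ioi (0:ℝ), g s := by
  have : 0 < ∫ s in Set.Ioi (0:ℝ), (g s - f s) := by
    apply integral_pos_of_pos_off (hg.sub hf) 0
    · intro s hs; exact sub_nonneg.2 (h s hs).le
    · intro s hs _; exact sub_pos.2 (h s hs)
  rw [integral_sub hg hf] at this
  linarith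

lemma Jk41_lt {t : ℝ} (ht : 0 < t) : Jk 4 t < Jk 1 t := by
  apply setIntegral_lt (integrable_kernel (by norm_num) ht) (integrable_kernel one_pos ht)
  intro s hs
  have hs' := Set.mem_Ioi.mp hs
  apply div_lt_div_of_pos_left (by positivity) (by positivity)
  linarith

lemma Jk41_gt {t : ℝ} (ht : 0 < t) : (1/4) * Jk 1 t < Jk 4 t := by
  rw [Jk, ← integral_const_mul]
  apply setIntegral_lt ((integrable_kernel one_pos ht).const_mul _)
    (integrable_kernel (by norm_num) ht)
  intro s hs
  have hs' := Set.mem_Ioi.mp hs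
  have hA : 0 < s ^ 2 * Real.exp (-(s*t)) := by positivity
  rw [show (1:ℝ)/4 * (s ^ 2 * Real.exp (-(s*t)) / (s ^ 2 + 1))
      = s ^ 2 * Real.exp (-(s*t)) / (4 * (s ^ 2 + 1)) by field_simp]
  exact div_lt_div_of_pos_left hA (by positivity) (by nlinarith)

lemma G_sign_pos {t₁ t₂ s u : ℝ} (h12 : t₁ < t₂) (hs : 0 < s) (hu : 0 < u) (hne : s ≠ u) :
    0 < s ^ 2 * Real.exp (-(s * t₁)) / (s ^ 2 + 4) * (u ^ 2 * Real.exp (-(u * t₂)) / (u ^ 2 + 1)) -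
        s ^ 2 * Real.exp (-(s * t₂)) / (s ^ 2 + 4) * (u ^ 2 * Real.exp (-(u * t₁)) / (u ^ 2 + 1)) +
        (u ^ 2 * Real.exp (-(u * t₁)) / (u ^ 2 + 4) * (s ^ 2 * Real.exp (-(s * t₂)) / (s ^ 2 + 1)) -
         u ^ 2 * Real.exp (-(u * t₂)) / (u ^ 2 + 4) * (s ^ 2 * Real.exp (-(s * t₁)) / (s ^ 2 + 1))) := by
  have hfac : s ^ 2 * Real.exp (-(s * t₁)) / (s ^ 2 + 4) * (u ^ 2 * Real.exp (-(u * t₂)) / (u ^ 2 + 1)) -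
        s ^ 2 * Real.exp (-(s * t₂)) / (s ^ 2 + 4) * (u ^ 2 * Real.exp (-(u * t₁)) / (u ^ 2 + 1)) +
        (u ^ 2 * Real.exp (-(u * t₁)) / (u ^ 2 + 4) * (s ^ 2 * Real.exp (-(s * t₂)) / (s ^ 2 + 1)) -
         u ^ 2 * Real.exp (-(u * t₂)) / (u ^ 2 + 4) * (s ^ 2 * Real.exp (-(s * t₁)) / (s ^ 2 + 1)))
      = (3 * s ^ 2 * u ^ 2 * (s ^ 2 - u ^ 2) / ((s ^ 2 + 4) * (u ^ 2 + 1) * (u ^ 2 + 4) * (s ^ 2 + 1)))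
        * (Real.exp (-(s * t₁)) * Real.exp (-(u * t₂)) - Real.exp (-(s * t₂)) * Real.exp (-(u * t₁))) := by
    field_simp
    ring
  rw [hfac]
  have hden : (0:ℝ) < (s ^ 2 + 4) * (u ^ 2 + 1) * (u ^ 2 + 4) * (s ^ 2 + 1) := by positivity
  rcases lt_or_gt_of_ne hne with h | h
  · -- s < u : both factors negative
    have hP : 3 * s ^ 2 * u ^ 2 * (s ^ 2 - u ^ 2) / ((s ^ 2 + 4) * (u ^ 2 + 1) * (u ^ 2 + 4) * (s ^ 2 + 1)) < 0 := by
      apply div_neg_of_neg_of_pos _ hden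
      have h2 : 0 < s ^ 2 * u ^ 2 := by positivity
      have h3 : s ^ 2 - u ^ 2 < 0 := by nlinarith
      nlinarith [mul_neg_of_pos_of_neg h2 h3]
    have hQ : Real.exp (-(s * t₁)) * Real.exp (-(u * t₂)) - Real.exp (-(s * t₂)) * Real.exp (-(u * t₁)) < 0 := by
      rw [← Real.exp_add, ← Real.exp_add, sub_neg]
      exact Real.exp_lt_exp.2 (by nlinarith)
    exact mul_pos_of_neg_of_neg hP hQ
  · -- u < s : both positive
    have hP : 0 < 3 * s ^ 2 * u ^ 2 * (s ^ 2 - u ^ 2) / ((s ^ 2 + 4) * (u ^ 2 + 1) * (u ^ 2 + 4) * (s ^ 2 + 1)) := by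
      apply div_pos _ hden
      have h2 : 0 < s ^ 2 * u ^ 2 := by positivity
      have h3 : 0 < s ^ 2 - u ^ 2 := by nlinarith
      nlinarith [mul_pos h2 h3]
    have hQ : 0 < Real.exp (-(s * t₁)) * Real.exp (-(u * t₂)) - Real.exp (-(s * t₂)) * Real.exp (-(u * t₁)) := by
      rw [← Real.exp_add, ← Real.exp_add, sub_pos]
      exact Real.exp_lt_exp.2 (by nlinarith)
    exact mul_pos hP hQ

lemma G_sign_nonneg {t₁ t₂ s u : ℝ} (h12 : t₁ < t₂) (hs : 0 < s) (hu : 0 < u) :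
    0 ≤ s ^ 2 * Real.exp (-(s * t₁)) / (s ^ 2 + 4) * (u ^ 2 * Real.exp (-(u * t₂)) / (u ^ 2 + 1)) -
        s ^ 2 * Real.exp (-(s * t₂)) / (s ^ 2 + 4) * (u ^ 2 * Real.exp (-(u * t₁)) / (u ^ 2 + 1)) +
        (u ^ 2 * Real.exp (-(u * t₁)) / (u ^ 2 + 4) * (s ^ 2 * Real.exp (-(s * t₂)) / (s ^ 2 + 1)) -
         u ^ 2 * Real.exp (-(u * t₂)) / (u ^ 2 + 4) * (s ^ 2 * Real.exp (-(s * t₁)) / (s ^ 2 + 1))) := by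
  rcases eq_or_ne s u with rfl | hne
  · exact le_of_eq (by ring)
  · exact (G_sign_pos h12 hs hu hne).le

noncomputable def fa (t s : ℝ) : ℝ := s ^ 2 * Real.exp (-(s * t)) / (s ^ 2 + 4)
noncomputable def fb (t s : ℝ) : ℝ := s ^ 2 * Real.exp (-(s * t)) / (s ^ 2 + 1)
noncomputable def FF (t₁ t₂ s u : ℝ) : ℝ := fa t₁ s * fb t₂ u - fa t₂ s * fb t₁ u

lemma key_mono {t₁ t₂ : ℝ} (h1 : 0 < t₁) (h12 : t₁ < t₂) :
    Jk 4 t₂ * Jk 1 t₁ < Jk 4 t₁ * Jk 1 t₂ := by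
  have h2 : 0 < t₂ := h1.trans h12
  have Ia1 : IntegrableOn (fa t₁) (Set.Ioi 0) := integrable_kernel (by norm_num) h1
  have Ia2 : IntegrableOn (fa t₂) (Set.Ioi 0) := integrable_kernel (by norm_num) h2
  have Ib1 : IntegrableOn (fb t₁) (Set.Ioi 0) := integrable_kernel one_pos h1
  have Ib2 : IntegrableOn (fb t₂) (Set.Ioi 0) := integrable_kernel one_pos h2
  have inner_eq : ∀ s : ℝ, (∫ u in Set.Ioi (0:ℝ), FF t₁ t₂ s u)
      = fa t₁ s * Jk 1 t₂ - fa t₂ s * Jk 1 t₁ := by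
    intro s
    unfold FF
    rw [integral_sub (Ib2.const_mul _) (Ib1.const_mul _), integral_const_mul, integral_const_mul]
    rfl
  have hA : Jk 4 t₁ * Jk 1 t₂ - Jk 4 t₂ * Jk 1 t₁
      = ∫ s in Set.Ioi (0:ℝ), ∫ u in Set.Ioi (0:ℝ), FF t₁ t₂ s u := by
    simp only [inner_eq]
    rw [integral_sub (Ia1.mul_const _) (Ia2.mul_const _), integral_mul_const, integral_mul_const]
    rfl
  have hFi : Integrable (Function.uncurry (FF t₁ t₂))
      ((volume.restrict (Set.Ioi 0)).prod (volume.restrict (Set.Ioi 0))) := by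
    unfold Function.uncurry FF
    exact (Ia1.mul_prod Ib2).sub (Ia2.mul_prod Ib1)
  have hB : (∫ s in Set.Ioi (0:ℝ), ∫ u in Set.Ioi (0:ℝ), FF t₁ t₂ s u)
      = ∫ s in Set.Ioi (0:ℝ), ∫ u in Set.Ioi (0:ℝ), FF t₁ t₂ u s :=
    integral_integral_swap hFi
  have hsum : ∀ s : ℝ, (∫ u in Set.Ioi (0:ℝ), FF t₁ t₂ s u) + (∫ u in Set.Ioi (0:ℝ), FF t₁ t₂ u s)
      = ∫ u in Set.Ioi (0:ℝ), (FF t₁ t₂ s u + FF t₁ t₂ u s) := by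
    intro s
    rw [← integral_add]
    · exact (Ib2.const_mul _).sub (Ib1.const_mul _)
    · exact (Ia1.mul_const _).sub (Ia2.mul_const _)
  have houter : (0:ℝ) < ∫ s in Set.Ioi (0:ℝ), ∫ u in Set.Ioi (0:ℝ), (FF t₁ t₂ s u + FF t₁ t₂ u s) := by
    apply integral_pos_of_pos_off _ 0
    · intro s hs
      apply setIntegral_nonneg measurableSet_Ioi
      intro u hu
      exact G_sign_nonneg h12 hs hu
    · intro s hs _
      apply integral_pos_of_pos_off _ s
      · intro u hu
        exact G_sign_nonneg h12 hs hu
      · intro u hu hneu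
        exact G_sign_pos h12 hs hu (Ne.symm hneu)
      · exact (((Ib2.const_mul _).sub (Ib1.const_mul _)).add ((Ia1.mul_const _).sub (Ia2.mul_const _)))
    · apply Integrable.congr (hFi.integral_prod_left.add hFi.integral_prod_right)
      filter_upwards with s
      exact hsum s
  have e2 : (∫ s in Set.Ioi (0:ℝ), ∫ u in Set.Ioi (0:ℝ), FF t₁ t₂ s u)
        + (∫ s in Set.Ioi (0:ℝ), ∫ u in Set.Ioi (0:ℝ), FF t₁ t₂ u s)
      = ∫ s in Set.Ioi (0:ℝ), ((∫ u in Set.Ioi (0:ℝ), FF t₁ t₂ s u) + ∫ u in Set.Ioi (0:ℝ), FF t₁ t₂ u s) :=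
    (integral_add hFi.integral_prod_left hFi.integral_prod_right).symm
  have e3 : (∫ s in Set.Ioi (0:ℝ), ((∫ u in Set.Ioi (0:ℝ), FF t₁ t₂ s u) + ∫ u in Set.Ioi (0:ℝ), FF t₁ t₂ u s))
      = ∫ s in Set.Ioi (0:ℝ), ∫ u in Set.Ioi (0:ℝ), (FF t₁ t₂ s u + FF t₁ t₂ u s) :=
    integral_congr_ae (Filter.Eventually.of_forall hsum)
  nlinarith [hA, hB, e2, e3, houter]

lemma integral_exp_Ioi (a : ℝ) {t : ℝ} (ht : 0 < t) :
    (∫ s in Set.Ioi a, Real.exp (-(s * t))) = Real.exp (-(a * t)) / t := by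
  calc (∫ s in Set.Ioi a, Real.exp (-(s * t))) = ∫ s in Set.Ioi a, Real.exp (-(t * s)) := by
        apply integral_congr_ae; filter_upwards with s; ring_nf
    _ = t⁻¹ • ∫ x in Set.Ioi (t * a), Real.exp (-x) :=
        MeasureTheory.integral_comp_mul_left_Ioi (fun u : ℝ => Real.exp (-u)) a ht
    _ = Real.exp (-(a * t)) / t := by
        rw [integral_exp_neg_Ioi, smul_eq_mul, mul_comm t a, inv_mul_eq_div]

lemma Jlb_small {t : ℝ} (h0 : 0 < t) (h1 : t ≤ 1) : Real.exp (-1) / (2 * t) ≤ Jk 1 t := by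
  have hint : IntegrableOn (fun s : ℝ => s ^ 2 * Real.exp (-(s * t)) / (s ^ 2 + 1)) (Set.Ioi 1) :=
    (integrable_kernel one_pos h0).mono_set (Set.Ioi_subset_Ioi zero_le_one)
  have hexp : IntegrableOn (fun s : ℝ => 1 / 2 * Real.exp (-(s * t))) (Set.Ioi 1) := by
    apply Integrable.const_mul
    apply ((exp_neg_integrableOn_Ioi 1 h0).congr_fun _ measurableSet_Ioi)
    intro s _; show Real.exp (-t * s) = Real.exp (-(s * t)); ring_nf
  have step1 : (∫ s in Set.Ioi (1:ℝ), 1 / 2 * Real.exp (-(s * t)))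
      ≤ ∫ s in Set.Ioi (1:ℝ), s ^ 2 * Real.exp (-(s * t)) / (s ^ 2 + 1) := by
    apply setIntegral_mono_on hexp hint measurableSet_Ioi
    intro s hs
    have hs' : (1:ℝ) < s := hs
    have hhalf : (1:ℝ) / 2 ≤ s ^ 2 / (s ^ 2 + 1) := by
      rw [div_le_div_iff₀ (by norm_num) (by positivity)]
      nlinarith
    calc 1 / 2 * Real.exp (-(s * t)) ≤ s ^ 2 / (s ^ 2 + 1) * Real.exp (-(s * t)) :=
          mul_le_mul_of_nonneg_right hhalf (Real.exp_pos _).le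
      _ = s ^ 2 * Real.exp (-(s * t)) / (s ^ 2 + 1) := by ring
  have step2 : (∫ s in Set.Ioi (1:ℝ), s ^ 2 * Real.exp (-(s * t)) / (s ^ 2 + 1)) ≤ Jk 1 t := by
    apply setIntegral_mono_set (integrable_kernel one_pos h0)
    · apply (ae_restrict_iff' measurableSet_Ioi).2
      filter_upwards with s _
      exact kernel_nonneg one_pos s
    · exact HasSubset.Subset.eventuallyLE (Set.Ioi_subset_Ioi zero_le_one)
  have hval : (∫ s in Set.Ioi (1:ℝ), 1 / 2 * Real.exp (-(s * t)))
      = 1 / 2 * (Real.exp (-(1 * t)) / t) := by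
    rw [integral_const_mul, integral_exp_Ioi 1 h0]
  have hmono : Real.exp (-1) ≤ Real.exp (-(1 * t)) := by
    apply Real.exp_le_exp.2; nlinarith
  have : Real.exp (-1) / (2 * t) ≤ 1 / 2 * (Real.exp (-(1 * t)) / t) := by
    rw [div_le_iff₀ (by positivity), mul_comm]
    rw [mul_comm (2*t) _] at *
    field_simp
    simp only [one_mul] at hmono
    nlinarith
  linarith [step1, step2, hval.symm.le, this]

noncomputable def CC : ℝ := ∫ s in Set.Ioi (0:ℝ), 3 * (1 + s ^ 2)⁻¹

lemma CC_int : IntegrableOn (fun s : ℝ => 3 * (1 + s ^ 2)⁻¹) (Set.Ioi 0) :=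
  (integrable_inv_one_add_sq.integrableOn).const_mul 3

lemma CC_nonneg : 0 ≤ CC := by
  apply setIntegral_nonneg measurableSet_Ioi
  intro s _; positivity

lemma diff_small {t : ℝ} (h0 : 0 < t) : Jk 1 t - Jk 4 t ≤ CC := by
  rw [Jk, Jk, ← integral_sub (integrable_kernel one_pos h0) (integrable_kernel (by norm_num) h0)]
  apply setIntegral_mono_on _ CC_int measurableSet_Ioi
  · intro s hs
    have hs' : 0 < s := hs
    have hE1 : Real.exp (-(s * t)) ≤ 1 := Real.exp_le_one_iff.2 (by nlinarith)
    have hE0 : 0 < Real.exp (-(s * t)) := Real.exp_pos _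
    have heq : s ^ 2 * Real.exp (-(s * t)) / (s ^ 2 + 1) - s ^ 2 * Real.exp (-(s * t)) / (s ^ 2 + 4)
        = 3 * s ^ 2 * Real.exp (-(s * t)) / ((s ^ 2 + 1) * (s ^ 2 + 4)) := by
      field_simp
      ring
    rw [heq, div_le_iff₀ (by positivity), mul_comm (3 * (1 + s ^ 2)⁻¹) _, ← mul_assoc]
    have h14 : (1:ℝ) ≤ (1 + s ^ 2)⁻¹ * (s ^ 2 + 1) := by
      rw [inv_mul_eq_div, le_div_iff₀ (by positivity)]; nlinarith
    nlinarith [mul_pos (mul_pos (by positivity : (0:ℝ) < 3 * s ^ 2) hE0) (by positivity : (0:ℝ) < s ^ 2 + 4)]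
  · exact (integrable_kernel one_pos h0).sub (integrable_kernel (by norm_num) h0)

lemma Jlb_big {t : ℝ} (h1 : 1 ≤ t) : Real.exp (-1) / (6 * t ^ 3) ≤ Jk 1 t := by
  have h0 : 0 < t := lt_of_lt_of_le one_pos h1
  have hsub : Set.Ioc (0:ℝ) (1/t) ⊆ Set.Ioi 0 := Set.Ioc_subset_Ioi_self
  have hlow : ∀ s ∈ Set.Ioc (0:ℝ) (1/t), Real.exp (-1) / 2 * s ^ 2
      ≤ s ^ 2 * Real.exp (-(s * t)) / (s ^ 2 + 1) := by
    intro s hs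
    obtain ⟨hs0, hs1⟩ := hs
    have hst : s * t ≤ 1 := by
      rw [div_eq_mul_inv, one_mul] at hs1
      calc s * t ≤ t⁻¹ * t := by apply mul_le_mul_of_nonneg_right hs1 h0.le
        _ = 1 := inv_mul_cancel₀ h0.ne'
    have hE : Real.exp (-1) ≤ Real.exp (-(s * t)) := Real.exp_le_exp.2 (by linarith)
    have hs2 : s ^ 2 + 1 ≤ 2 := by
      have : s ≤ 1 := le_trans hs1 (by rw [div_le_one h0]; exact h1)
      nlinarith
    rw [le_div_iff₀ (by positivity)]
    calc Real.exp (-1) / 2 * s ^ 2 * (s ^ 2 + 1) ≤ Real.exp (-1) / 2 * s ^ 2 * 2 := by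
          apply mul_le_mul_of_nonneg_left hs2 (by positivity)
      _ = s ^ 2 * Real.exp (-1) := by ring
      _ ≤ s ^ 2 * Real.exp (-(s * t)) := mul_le_mul_of_nonneg_left hE (by positivity)
  have hint : IntegrableOn (fun s : ℝ => s ^ 2 * Real.exp (-(s * t)) / (s ^ 2 + 1)) (Set.Ioc 0 (1/t)) :=
    (integrable_kernel one_pos h0).mono_set hsub
  have hploy : IntegrableOn (fun s : ℝ => Real.exp (-1) / 2 * s ^ 2) (Set.Ioc 0 (1/t)) := by
    apply Integrable.const_mul
    apply (continuous_pow 2).integrableOn_Ioc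
  have step1 : (∫ s in Set.Ioc (0:ℝ) (1/t), Real.exp (-1) / 2 * s ^ 2)
      ≤ ∫ s in Set.Ioc (0:ℝ) (1/t), s ^ 2 * Real.exp (-(s * t)) / (s ^ 2 + 1) :=
    setIntegral_mono_on hploy hint measurableSet_Ioc hlow
  have step2 : (∫ s in Set.Ioc (0:ℝ) (1/t), s ^ 2 * Real.exp (-(s * t)) / (s ^ 2 + 1)) ≤ Jk 1 t := by
    apply setIntegral_mono_set (integrable_kernel one_pos h0)
    · apply (ae_restrict_iff' measurableSet_Ioi).2
      filter_upwards with s _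
      exact kernel_nonneg one_pos s
    · exact HasSubset.Subset.eventuallyLE hsub
  have hval : (∫ s in Set.Ioc (0:ℝ) (1/t), Real.exp (-1) / 2 * s ^ 2)
      = Real.exp (-1) / (6 * t ^ 3) := by
    rw [integral_const_mul, ← intervalIntegral.integral_of_le (by positivity : (0:ℝ) ≤ 1/t),
      integral_pow]
    field_simp
    have ht3 : t ^ 3 * t⁻¹ ^ 3 = 1 := by rw [← mul_pow, mul_inv_cancel₀ h0.ne', one_pow]
    linear_combination (6:ℝ) * ht3
  linarith

lemma quartic_exp_bound {t s : ℝ} (h0 : 0 < t) (hs : 0 < s) :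
    s ^ 4 * Real.exp (-(s * (t / 2))) ≤ 4096 / t ^ 4 := by
  set y := s * (t / 2) with hy
  have hy0 : 0 < y := by positivity
  have h14 : y / 4 ≤ Real.exp (y / 4) := by
    nlinarith [Real.add_one_le_exp (y / 4)]
  have hpow : (y / 4) ^ 4 ≤ Real.exp (y / 4) ^ 4 :=
    pow_le_pow_left₀ (by positivity) h14 4
  have hexp4 : Real.exp (y / 4) ^ 4 = Real.exp y := by
    rw [← Real.exp_nat_mul]
    congr 1
    push_cast
    ring
  have hkey : y ^ 4 / 256 ≤ Real.exp y := by
    rw [hexp4] at hpow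
    nlinarith [hpow]
  have hyv : y ^ 4 = s ^ 4 * t ^ 4 / 16 := by rw [hy]; ring
  have hEpos : 0 < Real.exp y := Real.exp_pos _
  rw [Real.exp_neg, mul_comm, inv_mul_eq_div, div_le_div_iff₀ hEpos (by positivity)]
  calc s ^ 4 * t ^ 4 = 16 * y ^ 4 := by rw [hyv]; ring
    _ ≤ 4096 * Real.exp y := by nlinarith [hkey]

lemma diff_big {t : ℝ} (h0 : 0 < t) : Jk 4 t - 1 / 4 * Jk 1 t ≤ 6144 / t ^ 5 := by
  have ht2 : 0 < t / 2 := by positivity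
  have hintb : IntegrableOn (fun s : ℝ => 3072 / t ^ 4 * Real.exp (-(s * (t / 2)))) (Set.Ioi 0) := by
    apply Integrable.const_mul
    apply ((exp_neg_integrableOn_Ioi 0 ht2).congr_fun _ measurableSet_Ioi)
    intro s _; show Real.exp (-(t/2) * s) = Real.exp (-(s * (t/2))); ring_nf
  have step1 : Jk 4 t - 1 / 4 * Jk 1 t
      ≤ ∫ s in Set.Ioi (0:ℝ), 3072 / t ^ 4 * Real.exp (-(s * (t / 2))) := by
    rw [Jk, Jk, ← integral_const_mul, ← integral_sub (integrable_kernel (by norm_num) h0)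
      ((integrable_kernel one_pos h0).const_mul _)]
    apply setIntegral_mono_on _ hintb measurableSet_Ioi
    · intro s hs
      have hs' : 0 < s := hs
      have heq : s ^ 2 * Real.exp (-(s * t)) / (s ^ 2 + 4)
          - 1 / 4 * (s ^ 2 * Real.exp (-(s * t)) / (s ^ 2 + 1))
          = 3 * s ^ 4 * Real.exp (-(s * t)) / (4 * (s ^ 2 + 1) * (s ^ 2 + 4)) := by
        field_simp
        ring
      have hEsplit : Real.exp (-(s * t)) = Real.exp (-(s * (t/2))) * Real.exp (-(s * (t/2))) := by
        rw [← Real.exp_add]; ring_nf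
      have hub : 3 * s ^ 4 * Real.exp (-(s * t)) / (4 * (s ^ 2 + 1) * (s ^ 2 + 4))
          ≤ 3 / 4 * (s ^ 4 * Real.exp (-(s * t))) := by
        rw [div_le_iff₀ (by positivity)]
        have h1 : (4:ℝ) ≤ 4 * (s ^ 2 + 1) * (s ^ 2 + 4) / 4 := by nlinarith [sq_nonneg s, sq_nonneg (s^2)]
        nlinarith [mul_pos (by positivity : (0:ℝ) < 3 * s ^ 4) (Real.exp_pos (-(s * t))), sq_nonneg s, sq_nonneg (s^2), mul_pos (mul_pos (by positivity : (0:ℝ) < 3 * s^4) (Real.exp_pos (-(s*t)))) (by positivity : (0:ℝ) < s^2*(s^2+5))]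
      have hq : 3 / 4 * (s ^ 4 * Real.exp (-(s * t))) ≤ 3072 / t ^ 4 * Real.exp (-(s * (t / 2))) := by
        rw [hEsplit]
        have hqb := quartic_exp_bound h0 hs'
        have hE2 : (0:ℝ) < Real.exp (-(s * (t/2))) := Real.exp_pos _
        calc 3 / 4 * (s ^ 4 * (Real.exp (-(s * (t/2))) * Real.exp (-(s * (t/2)))))
            = 3 / 4 * (s ^ 4 * Real.exp (-(s * (t/2))) * Real.exp (-(s * (t/2)))) := by ring
          _ ≤ 3 / 4 * (4096 / t ^ 4 * Real.exp (-(s * (t/2)))) :=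
              mul_le_mul_of_nonneg_left (mul_le_mul_of_nonneg_right hqb hE2.le) (by norm_num)
          _ = 3072 / t ^ 4 * Real.exp (-(s * (t / 2))) := by ring
      rw [heq]
      linarith
    · exact (integrable_kernel (by norm_num) h0).sub ((integrable_kernel one_pos h0).const_mul _)
  have hval : (∫ s in Set.Ioi (0:ℝ), 3072 / t ^ 4 * Real.exp (-(s * (t / 2))))
      = 6144 / t ^ 5 := by
    rw [integral_const_mul, integral_exp_Ioi 0 ht2]
    rw [zero_mul, neg_zero, Real.exp_zero]
    field_simp
    ring
  linarith

lemma Jk_contAt {c t₀ : ℝ} (hc : 0 < c) (ht : 0 < t₀) : ContinuousAt (Jk c) t₀ := by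
  have h2 : 0 < t₀ / 2 := by positivity
  show ContinuousAt (fun t => ∫ s in Set.Ioi (0:ℝ), s ^ 2 * Real.exp (-(s * t)) / (s ^ 2 + c)) t₀
  apply MeasureTheory.continuousAt_of_dominated (bound := fun s => Real.exp (-(t₀ / 2) * s))
  · filter_upwards with t
    exact (kernel_cont hc).aestronglyMeasurable.restrict
  · have hmem : Set.Ioi (t₀ / 2) ∈ nhds t₀ := Ioi_mem_nhds (by linarith)
    filter_upwards [hmem] with t ht'
    apply (ae_restrict_iff' measurableSet_Ioi).2
    filter_upwards with s hs
    have hs' : 0 < s := hs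
    have ht'' : t₀ / 2 < t := ht'
    rw [Real.norm_eq_abs, abs_of_nonneg (kernel_nonneg hc s)]
    calc s ^ 2 * Real.exp (-(s * t)) / (s ^ 2 + c) ≤ Real.exp (-(t * s)) := kernel_le hc s
      _ ≤ Real.exp (-(t₀ / 2) * s) := Real.exp_le_exp.2 (by nlinarith)
  · exact exp_neg_integrableOn_Ioi 0 h2
  · filter_upwards with s
    apply Continuous.continuousAt
    apply Continuous.div _ continuous_const (fun _ => by positivity)
    exact continuous_const.mul (Real.continuous_exp.comp (continuous_const.mul continuous_id).neg)

lemma I'_neg {t : ℝ} (ht : 0 < t) : I' t < 0 := by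
  rw [I'_eq_s17]
  simpa using Jk_pos one_pos ht

lemma rr_eq {t : ℝ} (ht : 0 < t) : I' (2 * t) / I' t = Jk 4 t / (2 * Jk 1 t) := by
  rw [I'_eq_s17, I'_eq_s17, neg_div_neg_eq, Jk_scale]
  ring

lemma rr_mem {t : ℝ} (ht : 0 < t) : I' (2 * t) / I' t ∈ Set.Ioo (1/8 : ℝ) (1/2) := by
  rw [rr_eq ht]
  have hp := Jk_pos one_pos ht
  constructor
  · rw [lt_div_iff₀ (by linarith)]
    have := Jk41_gt ht
    linarith
  · rw [div_lt_iff₀ (by linarith)]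
    have := Jk41_lt ht
    linarith

lemma rr_anti : StrictAntiOn (fun t => I' (2 * t) / I' t) (Set.Ioi (0:ℝ)) := by
  intro t₁ h₁ t₂ h₂ h12
  have h₁' : (0:ℝ) < t₁ := h₁
  have h₂' : (0:ℝ) < t₂ := h₂
  have p₁ := Jk_pos one_pos h₁'
  have p₂ := Jk_pos one_pos h₂'
  simp only []
  rw [rr_eq h₁', rr_eq h₂']
  rw [div_lt_div_iff₀ (by linarith) (by linarith)]
  have := key_mono h₁' h12
  nlinarith

lemma rr_contOn : ContinuousOn (fun t => I' (2 * t) / I' t) (Set.Ioi (0:ℝ)) := by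
  intro t ht
  have ht' : (0:ℝ) < t := ht
  apply ContinuousAt.continuousWithinAt
  have c1 : ContinuousAt (fun t : ℝ => I' (2 * t)) t := by
    show ContinuousAt (fun t : ℝ => -Jk 1 (2 * t)) t
    apply ContinuousAt.neg
    exact (Jk_contAt one_pos (by positivity : (0:ℝ) < 2 * t)).comp
      ((continuous_const.mul continuous_id).continuousAt)
  have c2 : ContinuousAt (fun t : ℝ => I' t) t := by
    show ContinuousAt (fun t : ℝ => -Jk 1 t) t
    exact (Jk_contAt one_pos ht').neg
  exact c1.div c2 (ne_of_lt (I'_neg ht'))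

lemma half_bound {t : ℝ} (h0 : 0 < t) (h1 : t ≤ 1) :
    1/2 - I' (2 * t) / I' t ≤ CC * Real.exp 1 * t := by
  rw [rr_eq h0]
  have hp := Jk_pos one_pos h0
  have hJ := Jlb_small h0 h1
  have hd := diff_small h0
  have hlt := Jk41_lt h0
  have he : (0:ℝ) < Real.exp (-1) := Real.exp_pos _
  have key : (Jk 1 t - Jk 4 t) / (2 * Jk 1 t) ≤ CC / (Real.exp (-1) / t) := by
    apply div_le_div₀ CC_nonneg hd (by positivity)
    calc Real.exp (-1) / t = 2 * (Real.exp (-1) / (2 * t)) := by ring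
      _ ≤ 2 * Jk 1 t := by linarith
  have hval : CC / (Real.exp (-1) / t) = CC * Real.exp 1 * t := by
    rw [Real.exp_neg]
    field_simp
  have heq : 1/2 - Jk 4 t / (2 * Jk 1 t) = (Jk 1 t - Jk 4 t) / (2 * Jk 1 t) := by
    field_simp
  rw [heq]
  linarith [key, hval.le]

lemma eighth_bound {t : ℝ} (h1 : 1 ≤ t) :
    I' (2 * t) / I' t - 1/8 ≤ 18432 * Real.exp 1 / t ^ 2 := by
  have h0 : (0:ℝ) < t := lt_of_lt_of_le one_pos h1
  rw [rr_eq h0]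
  have hp := Jk_pos one_pos h0
  have hJ := Jlb_big h1
  have hd := diff_big h0
  have hgt := Jk41_gt h0
  have he : (0:ℝ) < Real.exp (-1) := Real.exp_pos _
  have key : (Jk 4 t - 1/4 * Jk 1 t) / (2 * Jk 1 t)
      ≤ (6144 / t ^ 5) / (Real.exp (-1) / (3 * t ^ 3)) := by
    apply div_le_div₀ (by positivity) (by linarith) (by positivity)
    calc Real.exp (-1) / (3 * t ^ 3) = 2 * (Real.exp (-1) / (6 * t ^ 3)) := by ring
      _ ≤ 2 * Jk 1 t := by linarith
  have hval : (6144 / t ^ 5) / (Real.exp (-1) / (3 * t ^ 3)) = 18432 * Real.exp 1 / t ^ 2 := by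
    rw [Real.exp_neg]
    field_simp
    ring
  have heq : Jk 4 t / (2 * Jk 1 t) - 1/8 = (Jk 4 t - 1/4 * Jk 1 t) / (2 * Jk 1 t) := by
    field_simp
    ring
  rw [heq]
  linarith [key, hval.le]

lemma exists_hi {q : ℝ} (hq : q < 1/2) : ∃ t, 0 < t ∧ q < I' (2 * t) / I' t := by
  have hC : (0:ℝ) ≤ CC * Real.exp 1 := mul_nonneg CC_nonneg (Real.exp_pos _).le
  set t := min 1 ((1/2 - q) / (CC * Real.exp 1 + 1)) with htdef
  have hdpos : (0:ℝ) < (1/2 - q) / (CC * Real.exp 1 + 1) := div_pos (by linarith) (by linarith)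
  have ht0 : 0 < t := lt_min one_pos hdpos
  have ht1 : t ≤ 1 := min_le_left _ _
  have ht2 : t ≤ (1/2 - q) / (CC * Real.exp 1 + 1) := min_le_right _ _
  refine ⟨t, ht0, ?_⟩
  have hb := half_bound ht0 ht1
  have hsmall : CC * Real.exp 1 * t < 1/2 - q := by
    have step : CC * Real.exp 1 * t ≤ CC * Real.exp 1 * ((1/2 - q) / (CC * Real.exp 1 + 1)) :=
      mul_le_mul_of_nonneg_left ht2 hC
    have step2 : CC * Real.exp 1 * ((1/2 - q) / (CC * Real.exp 1 + 1)) < 1/2 - q := by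
      rw [mul_div_assoc', div_lt_iff₀ (by linarith)]
      nlinarith
    linarith
  linarith

lemma exists_lo {q : ℝ} (hq : 1/8 < q) : ∃ t, 0 < t ∧ I' (2 * t) / I' t < q := by
  have hqp : (0:ℝ) < q - 1/8 := by linarith
  have hE : (0:ℝ) < Real.exp 1 := Real.exp_pos _
  set t := 1 + 18432 * Real.exp 1 / (q - 1/8) with htdef
  have ht1 : (1:ℝ) ≤ t := by
    have h' : 0 ≤ 18432 * Real.exp 1 / (q - 1/8) := by positivity
    rw [htdef]
    exact le_add_of_nonneg_right h'
  have ht0 : (0:ℝ) < t := by linarith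
  refine ⟨t, ht0, ?_⟩
  have hb := eighth_bound ht1
  have hsmall : 18432 * Real.exp 1 / t ^ 2 < q - 1/8 := by
    have ht2 : t ≤ t ^ 2 := by nlinarith
    have s1 : 18432 * Real.exp 1 / t ^ 2 ≤ 18432 * Real.exp 1 / t :=
      div_le_div_of_nonneg_left (by positivity) ht0 ht2
    have s2 : 18432 * Real.exp 1 / t < q - 1/8 := by
      rw [div_lt_iff₀ ht0, htdef]
      have : (q - 1/8) * (18432 * Real.exp 1 / (q - 1/8)) = 18432 * Real.exp 1 := by
        rw [mul_comm]
        exact div_mul_cancel₀ _ (ne_of_gt hqp)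
      nlinarith
    linarith
  linarith

lemma rr_surj : Set.SurjOn (fun t => I' (2 * t) / I' t) (Set.Ioi (0:ℝ))
    (Set.Ioo (1/8 : ℝ) (1/2)) := by
  intro q hq
  obtain ⟨t₁, ht₁, h₁⟩ := exists_hi hq.2
  obtain ⟨t₂, ht₂, h₂⟩ := exists_lo hq.1
  have h12 : t₁ < t₂ := by
    by_contra h
    push_neg at h
    rcases eq_or_lt_of_le h with rfl | hlt
    · linarith
    · have := rr_anti (Set.mem_Ioi.2 ht₂) (Set.mem_Ioi.2 ht₁) hlt
      simp only [] at this
      linarith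
  have hcont : ContinuousOn (fun t => I' (2 * t) / I' t) (Set.Icc t₁ t₂) :=
    rr_contOn.mono (fun x hx => lt_of_lt_of_le ht₁ hx.1)
  have hmem : q ∈ Set.Icc ((fun t => I' (2 * t) / I' t) t₂) ((fun t => I' (2 * t) / I' t) t₁) :=
    ⟨h₂.le, h₁.le⟩
  obtain ⟨t, htmem, hteq⟩ := intermediate_value_Icc' h12.le hcont hmem
  exact ⟨t, Set.mem_Ioi.2 (lt_of_lt_of_le ht₁ htmem.1), hteq⟩

theorem I'_ratio_bijective :
    (∀ q ∈ Set.Ioo (1/8 : ℝ) (1/2), ∃! t₀ : ℝ, 0 < t₀ ∧ I' (2 * t₀) = q * I' t₀) ∧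
    Set.BijOn (fun t => I' (2 * t) / I' t) (Set.Ioi (0:ℝ)) (Set.Ioo (1/8 : ℝ) (1/2)) := by
  have hinj := rr_anti.injOn
  constructor
  · intro q hq
    obtain ⟨t₀, ht₀, heq⟩ := rr_surj hq
    have ht₀' : (0:ℝ) < t₀ := ht₀
    have hne : I' t₀ ≠ 0 := ne_of_lt (I'_neg ht₀')
    refine ⟨t₀, ⟨ht₀', ?_⟩, ?_⟩
    · have : I' (2 * t₀) / I' t₀ = q := heq
      field_simp at this
      linarith [this]
    · rintro y ⟨hy, hyeq⟩
      have hne' : I' y ≠ 0 := ne_of_lt (I'_neg hy)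
      have hry : I' (2 * y) / I' y = q := by
        rw [hyeq]
        field_simp
      have hrt : I' (2 * t₀) / I' t₀ = q := heq
      have hb : (fun t => I' (2 * t) / I' t) y = (fun t => I' (2 * t) / I' t) t₀ := by
        simp only []
        rw [hry, hrt]
      exact hinj (Set.mem_Ioi.2 hy) (Set.mem_Ioi.2 ht₀') hb
  · exact ⟨fun t ht => rr_mem ht, hinj, rr_surj⟩
end

section
/- For every b > 0 and r > 0, the function f_r(t) = 1/(b + t) − t e^{-2rt/b}/(b + t)² is nonincreasing in t on (0, ∞) and satisfies f_r(t) ≥ 0 for all t > 0, with f_r(t) → 0 as t → ∞. -/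
open Real Filter

noncomputable def f (b r t : ℝ) : ℝ := 1 / (b + t) - t * Real.exp (-(2 * r * t / b)) / (b + t) ^ 2

lemma f_hasDeriv (b r : ℝ) (hb : 0 < b) (t : ℝ) (ht : 0 < t) :
    HasDerivAt (f b r)
      ((0 * (b + t) - 1 * 1) / (b + t) ^ 2 -
        ((1 * Real.exp (-(2 * r * t / b)) + t * (Real.exp (-(2 * r * t / b)) * (-(2 * r / b)))) * (b + t) ^ 2
          - t * Real.exp (-(2 * r * t / b)) * (2 * (b + t) ^ 1 * 1)) / ((b + t) ^ 2) ^ 2) t := by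
  have hP : (0:ℝ) < b + t := by linarith
  have hg : HasDerivAt (fun t : ℝ => -(2 * r * t / b)) (-(2 * r / b)) t := by
    have : HasDerivAt (fun t : ℝ => 2 * r * t / b) (2 * r / b) t := by
      simpa using ((hasDerivAt_id t).const_mul (2 * r)).div_const b
    exact this.neg
  have hexp := hg.exp
  have hnum : HasDerivAt (fun t : ℝ => t * Real.exp (-(2 * r * t / b)))
      (1 * Real.exp (-(2 * r * t / b)) + t * (Real.exp (-(2 * r * t / b)) * (-(2 * r / b)))) t :=
    (hasDerivAt_id t).mul hexp
  have hden : HasDerivAt (fun t : ℝ => (b + t) ^ 2) (2 * (b + t) ^ 1 * 1) t :=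
    ((hasDerivAt_id t).const_add b).pow 2
  have h1 : HasDerivAt (fun t : ℝ => 1 / (b + t)) ((0 * (b + t) - 1 * 1) / (b + t) ^ 2) t :=
    (hasDerivAt_const t 1).div ((hasDerivAt_id t).const_add b) (ne_of_gt hP)
  have h2 := hnum.div hden (by positivity)
  exact h1.sub h2

lemma deriv_nonpos (b r : ℝ) (hb : 0 < b) (hr : 0 < r) (t : ℝ) (ht : 0 < t) :
    ((0 * (b + t) - 1 * 1) / (b + t) ^ 2 -
        ((1 * Real.exp (-(2 * r * t / b)) + t * (Real.exp (-(2 * r * t / b)) * (-(2 * r / b)))) * (b + t) ^ 2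
          - t * Real.exp (-(2 * r * t / b)) * (2 * (b + t) ^ 1 * 1)) / ((b + t) ^ 2) ^ 2) ≤ 0 := by
  have hP : (0:ℝ) < b + t := by linarith
  have hE0 : 0 < Real.exp (-(2 * r * t / b)) := Real.exp_pos _
  have hR0 : 0 ≤ 2 * r * t / b := by positivity
  have hkey : (2 * r * t / b) * Real.exp (-(2 * r * t / b)) ≤ 1 - Real.exp (-(2 * r * t / b)) := by
    have h1 : 2 * r * t / b + 1 ≤ Real.exp (2 * r * t / b) := Real.add_one_le_exp _
    have h2 : Real.exp (-(2 * r * t / b)) * Real.exp (2 * r * t / b) = 1 := by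
      rw [← Real.exp_add]; simp
    nlinarith [h1, hE0]
  have hN : ((0 * (b + t) - 1 * 1) / (b + t) ^ 2 -
        ((1 * Real.exp (-(2 * r * t / b)) + t * (Real.exp (-(2 * r * t / b)) * (-(2 * r / b)))) * (b + t) ^ 2
          - t * Real.exp (-(2 * r * t / b)) * (2 * (b + t) ^ 1 * 1)) / ((b + t) ^ 2) ^ 2)
      = (-(b + t) - (Real.exp (-(2 * r * t / b)) - Real.exp (-(2 * r * t / b)) * (2 * r * t / b)) * (b + t)
          + 2 * t * Real.exp (-(2 * r * t / b))) / (b + t) ^ 3 := by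
    field_simp
    ring
  rw [hN]
  apply div_nonpos_of_nonpos_of_nonneg
  · nlinarith [hkey, hE0.le, hP, mul_nonneg hE0.le hb.le, mul_pos hE0 hP, mul_pos hE0 ht,
      mul_le_mul_of_nonneg_right hkey hP.le]
  · positivity

theorem f_antitone_nonneg (b r : ℝ) (hb : 0 < b) (hr : 0 < r) :
    AntitoneOn (f b r) (Set.Ioi (0:ℝ)) ∧
    (∀ t, 0 < t → 0 ≤ f b r t) ∧
    Tendsto (f b r) atTop (nhds 0) := by
  refine ⟨?_, ?_, ?_⟩
  · apply antitoneOn_of_deriv_nonpos (convex_Ioi 0)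
    · intro t ht
      exact ((f_hasDeriv b r hb t ht).differentiableAt).continuousAt.continuousWithinAt
    · intro t ht
      rw [interior_Ioi] at ht
      exact ((f_hasDeriv b r hb t ht).differentiableAt).differentiableWithinAt
    · intro t ht
      rw [interior_Ioi] at ht
      rw [(f_hasDeriv b r hb t ht).deriv]
      exact deriv_nonpos b r hb hr t ht
  · intro t ht
    have hP : (0:ℝ) < b + t := by linarith
    have hE1 : Real.exp (-(2 * r * t / b)) ≤ 1 := Real.exp_le_one_iff.2 (neg_nonpos.2 (by positivity))
    have hE0 : 0 < Real.exp (-(2 * r * t / b)) := Real.exp_pos _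
    have : t * Real.exp (-(2 * r * t / b)) / (b + t) ^ 2 ≤ 1 / (b + t) := by
      rw [div_le_div_iff₀ (by positivity) hP]
      nlinarith [mul_nonneg (mul_nonneg ht.le (sub_nonneg.2 hE1)) hP.le, mul_pos hb hP]
    unfold f; linarith
  · have h0 : Tendsto (fun t : ℝ => 1 / (b + t)) atTop (nhds 0) := by
      have := tendsto_atTop_add_const_left atTop b tendsto_id
      simp only [one_div]; exact this.inv_tendsto_atTop
    apply tendsto_of_tendsto_of_tendsto_of_le_of_le' (tendsto_const_nhds) h0
    · filter_upwards [eventually_gt_atTop 0] with t ht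
      have hP : (0:ℝ) < b + t := by linarith
      have hE1 : Real.exp (-(2 * r * t / b)) ≤ 1 := Real.exp_le_one_iff.2 (neg_nonpos.2 (by positivity))
      have : t * Real.exp (-(2 * r * t / b)) / (b + t) ^ 2 ≤ 1 / (b + t) := by
        rw [div_le_div_iff₀ (by positivity) hP]
        nlinarith [Real.exp_pos (-(2 * r * t / b)), mul_nonneg (mul_nonneg ht.le (sub_nonneg.2 hE1)) hP.le, mul_pos hb hP]
      unfold f; linarith
    · filter_upwards [eventually_gt_atTop 0] with t ht
      have hP : (0:ℝ) < b + t := by linarith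
      have hE0 : 0 < Real.exp (-(2 * r * t / b)) := Real.exp_pos _
      unfold f
      have : t * Real.exp (-(2 * r * t / b)) / (b + t) ^ 2 ≥ 0 := by positivity
      have h2 : 0 < 1 / (b + t) := by positivity
      nlinarith [div_nonneg (mul_nonneg ht.le hE0.le) (sq_nonneg (b+t))]
end
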